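/- arXiv:1308.2250 — 2 statements merged into one kernel-verified Lean document; each statement's English description precedes it below -/
import Mathlib

section
/- For all u, z ∈ ℝ and v > 0, Im(ψ(v+iu) − ψ(−ζ−iz)) = μ(u+z) + (vu − zζ)σ² + R₁(u,v,z) + R₂(u,v,z) + R₃(u,v,z) + R₄(u,v,z), where R₁ is ō(uv); R₂ is ō(z²−u²); R₃ has the same sign as z+u and |R₃| is ō((z+u)²); and R₄ is ō(z). -/
open MeasureTheory Filter Set Complex
open scoped ENNReal

/-- The Laplace exponent of the spectrally negative Lévy process with triplet `(μ, σ, ν)`. -/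
noncomputable def psi (μ σ : ℝ) (ν : Measure ℝ) (l : ℂ) : ℂ :=
  (μ : ℂ) * l + ((σ : ℂ) ^ 2 / 2) * l ^ 2 +
    ∫ x : ℝ, (Complex.exp (l * (x : ℂ)) - 1 - l * (x : ℂ)) ∂ν

/-- `IsRem R f` : the remainder `R(u,v,z)` is `ō(f(u,v,z))`, i.e. `|R| ≤ C |f|` uniformly over
`u, z ∈ ℝ`, `v > 0`, and `|R|/|f| → 0` as `|f| → ∞`. -/
def IsRem (R f : ℝ → ℝ → ℝ → ℝ) : Prop :=
  (∃ C : ℝ, ∀ (u z : ℝ) (v : ℝ), 0 < v → |R u v z| ≤ C * |f u v z|) ∧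
  (∀ δ : ℝ, 0 < δ → ∃ M : ℝ, 0 < M ∧
    ∀ (u z : ℝ) (v : ℝ), 0 < v → M ≤ |f u v z| → |R u v z| ≤ δ * |f u v z|)

lemma my_abs_sin_le (t : ℝ) : |Real.sin t| ≤ |t| := by
  have key : ∀ s : ℝ, 0 ≤ s → |Real.sin s| ≤ |s| := by
    intro s hs
    rcases le_total 1 s with h | h
    · calc |Real.sin s| ≤ 1 := Real.abs_sin_le_one s
        _ ≤ |s| := by rw [_root_.abs_of_nonneg hs]; exact h
    · rw [_root_.abs_of_nonneg hs, _root_.abs_of_nonneg]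
      · exact Real.sin_le hs
      · exact Real.sin_nonneg_of_nonneg_of_le_pi hs (by nlinarith [Real.pi_gt_three])
  rcases le_total 0 t with ht | ht
  · exact key t ht
  · have h := key (-t) (neg_nonneg.mpr ht)
    rwa [Real.sin_neg, abs_neg, abs_neg] at h

lemma my_cos_eq (t : ℝ) : Real.cos t = 1 - 2 * Real.sin (t/2)^2 := by
  have h1 := Real.cos_two_mul' (t/2)
  have h2 := Real.sin_sq_add_cos_sq (t/2)
  have : 2 * (t/2) = t := by ring
  rw [this] at h1
  nlinarith

lemma my_abs_cos_sub_one_le (t : ℝ) : |Real.cos t - 1| ≤ |t| := by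
  rw [my_cos_eq t, show 1 - 2 * Real.sin (t/2)^2 - 1 = -(2 * Real.sin (t/2)^2) by ring,
    abs_neg, _root_.abs_of_nonneg (by positivity)]
  have h1 := my_abs_sin_le (t/2)
  have h2 := Real.abs_sin_le_one (t/2)
  have h3 := abs_nonneg (Real.sin (t/2))
  have h4 : Real.sin (t/2)^2 = |Real.sin (t/2)|^2 := (_root_.sq_abs _).symm
  have h5 : |t| = 2 * |t/2| := by rw [abs_div]; simp; linarith [abs_nonneg t]
  nlinarith [abs_nonneg (t/2)]

lemma my_abs_cos_sub_one_le_two (t : ℝ) : |Real.cos t - 1| ≤ 2 := by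
  have := Real.abs_cos_le_one t
  rw [abs_le] at *
  constructor <;> linarith [this.1, this.2]

lemma my_abs_sin_sub_le_sq (t : ℝ) : |Real.sin t - t| ≤ t^2 := by
  have key : ∀ s : ℝ, 0 ≤ s → |Real.sin s - s| ≤ s^2 := by
    intro s hs
    rw [abs_sub_comm, _root_.abs_of_nonneg (by linarith [Real.sin_le hs])]
    rcases le_total s 1 with h1 | h1
    · rcases eq_or_lt_of_le hs with rfl | hs'
      · simp
      · nlinarith [Real.sin_gt_sub_cube hs']
    · rcases le_total s 2 with h2 | h2
      · have : 0 ≤ Real.sin s := Real.sin_nonneg_of_nonneg_of_le_pi hs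
          (by nlinarith [Real.pi_gt_three])
        nlinarith
      · have := Real.neg_one_le_sin s
        nlinarith
  rcases le_total 0 t with ht | ht
  · exact key t ht
  · have := key (-t) (by linarith)
    rw [Real.sin_neg] at this
    rw [show Real.sin t - t = -(Real.sin (-t) - (-t)) by rw [Real.sin_neg]; ring, abs_neg]
    calc |Real.sin (-t) - (-t)| ≤ (-t)^2 := key (-t) (by linarith)
      _ = t^2 := by ring

lemma my_abs_sin_sub_le_two (t : ℝ) : |Real.sin t - t| ≤ 2 * |t| := by
  calc |Real.sin t - t| ≤ |Real.sin t| + |t| := abs_sub _ _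
    _ ≤ |t| + |t| := by linarith [my_abs_sin_le t]
    _ = 2 * |t| := by ring

lemma my_abs_exp_sub_one_le {t : ℝ} (ht : t ≤ 0) : |Real.exp t - 1| ≤ |t| := by
  rw [_root_.abs_of_nonpos (by linarith [Real.exp_le_one_iff.mpr ht] : Real.exp t - 1 ≤ 0),
    _root_.abs_of_nonpos ht]
  linarith [Real.add_one_le_exp t]

lemma my_abs_exp_sub_one_le_one {t : ℝ} (ht : t ≤ 0) : |Real.exp t - 1| ≤ 1 := by
  rw [_root_.abs_of_nonpos (by linarith [Real.exp_le_one_iff.mpr ht] : Real.exp t - 1 ≤ 0)]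
  linarith [Real.exp_pos t]

lemma my_exp_sub_one_le {t : ℝ} (ht : 0 ≤ t) : Real.exp t - 1 ≤ t * Real.exp t := by
  have h2 : (-t + 1) * Real.exp t ≤ Real.exp (-t) * Real.exp t :=
    mul_le_mul_of_nonneg_right (Real.add_one_le_exp (-t)) (Real.exp_pos t).le
  rw [← Real.exp_add, neg_add_cancel, Real.exp_zero] at h2
  nlinarith


section bounds
variable {u v z s d t m x : ℝ}

lemma hxx (x : ℝ) : |x| * |x| = x^2 := by rw [← abs_mul, abs_mul_self]; ring

lemma bd1O (hx : x ≤ 0) (hv : 0 < v) :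
    |(Real.exp (v*x) - 1) * Real.sin (u*x)| ≤ (|u| * v) * x^2 := by
  rw [abs_mul]
  have h1 : |Real.exp (v*x) - 1| ≤ v * |x| := by
    have := my_abs_exp_sub_one_le (t := v*x) (by nlinarith)
    rwa [abs_mul, _root_.abs_of_pos hv] at this
  have h2 : |Real.sin (u*x)| ≤ |u| * |x| := by
    have := my_abs_sin_le (u*x); rwa [abs_mul] at this
  have key : |Real.exp (v*x) - 1| * |Real.sin (u*x)| ≤ (v * |x|) * (|u| * |x|) :=
    mul_le_mul h1 h2 (abs_nonneg _) (by positivity)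
  have heq : (v * |x|) * (|u| * |x|) = (|u| * v) * x^2 := by rw [← hxx x]; ring
  linarith

lemma bd1 (hx : x ≤ 0) (hv : 0 < v) (hm : 0 < m) (h : m ≤ v ∨ m ≤ |u|) :
    |(Real.exp (v*x) - 1) * Real.sin (u*x)| ≤ (|u| * v) * min (x^2) (|x|/m) := by
  rcases le_total (x^2) (|x|/m) with hmin | hmin
  · rw [min_eq_left hmin]; exact bd1O hx hv
  · rw [min_eq_right hmin, abs_mul, div_eq_mul_inv]
    have hs1 : |Real.sin (u*x)| ≤ |u| * |x| := by
      have := my_abs_sin_le (u*x); rwa [abs_mul] at this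
    have he1 : |Real.exp (v*x) - 1| ≤ v * |x| := by
      have := my_abs_exp_sub_one_le (t := v*x) (by nlinarith)
      rwa [abs_mul, _root_.abs_of_pos hv] at this
    rcases h with h | h
    · have he : |Real.exp (v*x) - 1| ≤ 1 := my_abs_exp_sub_one_le_one (by nlinarith)
      have key : |Real.exp (v*x) - 1| * |Real.sin (u*x)| ≤ 1 * (|u| * |x|) :=
        mul_le_mul he hs1 (abs_nonneg _) zero_le_one
      have hinv : (1:ℝ) ≤ m⁻¹ * v := by
        rw [← div_eq_inv_mul, le_div_iff₀ hm]; linarith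
      have h5 : |u| * |x| ≤ (|u| * |x|) * (m⁻¹ * v) :=
        le_mul_of_one_le_right (by positivity) hinv
      have heq : (|u| * |x|) * (m⁻¹ * v) = (|u| * v) * (|x| * m⁻¹) := by ring
      linarith
    · have hs : |Real.sin (u*x)| ≤ 1 := Real.abs_sin_le_one _
      have key : |Real.exp (v*x) - 1| * |Real.sin (u*x)| ≤ (v * |x|) * 1 :=
        mul_le_mul he1 hs (abs_nonneg _) (by positivity)
      have hinv : (1:ℝ) ≤ m⁻¹ * |u| := by
        rw [← div_eq_inv_mul, le_div_iff₀ hm]; linarith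
      have h5 : v * |x| ≤ (v * |x|) * (m⁻¹ * |u|) :=
        le_mul_of_one_le_right (by positivity) hinv
      have heq : (v * |x|) * (m⁻¹ * |u|) = (|u| * v) * (|x| * m⁻¹) := by ring
      linarith

lemma bd2O : |2 * (Real.sin (s*x) * (Real.cos (d*x) - 1))| ≤ (2 * |s| * |d|) * x^2 := by
  rw [abs_mul, abs_mul, _root_.abs_two]
  have h1 : |Real.sin (s*x)| ≤ |s| * |x| := by
    have := my_abs_sin_le (s*x); rwa [abs_mul] at this
  have h2 : |Real.cos (d*x) - 1| ≤ |d| * |x| := by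
    have := my_abs_cos_sub_one_le (d*x); rwa [abs_mul] at this
  have key : |Real.sin (s*x)| * |Real.cos (d*x) - 1| ≤ (|s| * |x|) * (|d| * |x|) :=
    mul_le_mul h1 h2 (abs_nonneg _) (by positivity)
  have heq : (|s| * |x|) * (|d| * |x|) = (|s| * |d|) * x^2 := by rw [← hxx x]; ring
  have h0 : 0 ≤ (|s| * |d|) * x^2 := by positivity
  linarith

lemma bd2 (hm : 0 < m) (h : m ≤ |s| ∨ m ≤ |d|) :
    |2 * (Real.sin (s*x) * (Real.cos (d*x) - 1))| ≤ (4 * |s| * |d|) * min (x^2) (|x|/m) := by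
  rcases le_total (x^2) (|x|/m) with hmin | hmin
  · rw [min_eq_left hmin]
    have h0 : 0 ≤ (|s| * |d|) * x^2 := by positivity
    have := bd2O (s := s) (d := d) (x := x)
    nlinarith
  · rw [min_eq_right hmin, abs_mul, abs_mul, _root_.abs_two, div_eq_mul_inv]
    have h1 : |Real.sin (s*x)| ≤ |s| * |x| := by
      have := my_abs_sin_le (s*x); rwa [abs_mul] at this
    have h2 : |Real.cos (d*x) - 1| ≤ |d| * |x| := by
      have := my_abs_cos_sub_one_le (d*x); rwa [abs_mul] at this
    have h1' : |Real.sin (s*x)| ≤ 1 := Real.abs_sin_le_one _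
    have h2' : |Real.cos (d*x) - 1| ≤ 2 := my_abs_cos_sub_one_le_two _
    rcases h with h | h
    · have key : |Real.sin (s*x)| * |Real.cos (d*x) - 1| ≤ 1 * (|d| * |x|) :=
        mul_le_mul h1' h2 (abs_nonneg _) zero_le_one
      have hinv : (1:ℝ) ≤ m⁻¹ * |s| := by
        rw [← div_eq_inv_mul, le_div_iff₀ hm]; linarith
      have h5 : |d| * |x| ≤ (|d| * |x|) * (m⁻¹ * |s|) :=
        le_mul_of_one_le_right (by positivity) hinv
      have heq : (|d| * |x|) * (m⁻¹ * |s|) = (|s| * |d|) * (|x| * m⁻¹) := by ring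
      have h0 : 0 ≤ (|s| * |d|) * (|x| * m⁻¹) := by positivity
      linarith
    · have key : |Real.sin (s*x)| * |Real.cos (d*x) - 1| ≤ (|s| * |x|) * 2 :=
        mul_le_mul h1 h2' (abs_nonneg _) (by positivity)
      have hinv : (1:ℝ) ≤ m⁻¹ * |d| := by
        rw [← div_eq_inv_mul, le_div_iff₀ hm]; linarith
      have h5 : |s| * |x| ≤ (|s| * |x|) * (m⁻¹ * |d|) :=
        le_mul_of_one_le_right (by positivity) hinv
      have heq : (|s| * |x|) * (m⁻¹ * |d|) = (|s| * |d|) * (|x| * m⁻¹) := by ring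
      linarith

lemma bd3O : |2 * (Real.sin (t*x) - t*x)| ≤ (2 * t^2) * x^2 := by
  rw [abs_mul, _root_.abs_two]
  have h1 : |Real.sin (t*x) - t*x| ≤ (t*x)^2 := my_abs_sin_sub_le_sq _
  have heq : (t*x)^2 = t^2 * x^2 := by ring
  linarith

lemma bd3 (hm : 0 < m) (h : m ≤ |t|) :
    |2 * (Real.sin (t*x) - t*x)| ≤ (4 * t^2) * min (x^2) (|x|/m) := by
  rcases le_total (x^2) (|x|/m) with hmin | hmin
  · rw [min_eq_left hmin]
    have h0 : 0 ≤ t^2 * x^2 := by positivity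
    have := bd3O (t := t) (x := x)
    nlinarith
  · rw [min_eq_right hmin, abs_mul, _root_.abs_two, div_eq_mul_inv]
    have h1 : |Real.sin (t*x) - t*x| ≤ 2 * (|t| * |x|) := by
      have := my_abs_sin_sub_le_two (t*x); rwa [abs_mul] at this
    have hinv : (1:ℝ) ≤ m⁻¹ * |t| := by
      rw [← div_eq_inv_mul, le_div_iff₀ hm]; linarith
    have h5 : |t| * |x| ≤ (|t| * |x|) * (m⁻¹ * |t|) :=
      le_mul_of_one_le_right (by positivity) hinv
    have heq : (|t| * |x|) * (m⁻¹ * |t|) = t^2 * (|x| * m⁻¹) := by rw [← hxx t]; ring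
    linarith

lemma bd4O {ζ : ℝ} : |(Real.exp (-ζ*x) - 1) * Real.sin (z*x)|
    ≤ |z| * (|Real.exp (-ζ*x) - 1| * |x|) := by
  rw [abs_mul]
  have h2 : |Real.sin (z*x)| ≤ |z| * |x| := by
    have := my_abs_sin_le (z*x); rwa [abs_mul] at this
  have key : |Real.exp (-ζ*x) - 1| * |Real.sin (z*x)| ≤ |Real.exp (-ζ*x) - 1| * (|z| * |x|) :=
    mul_le_mul_of_nonneg_left h2 (abs_nonneg _)
  have heq : |Real.exp (-ζ*x) - 1| * (|z| * |x|) = |z| * (|Real.exp (-ζ*x) - 1| * |x|) := by ring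
  linarith

lemma bd4 {ζ : ℝ} (hm : 0 < m) (h : m ≤ |z|) :
    |(Real.exp (-ζ*x) - 1) * Real.sin (z*x)|
    ≤ |z| * (|Real.exp (-ζ*x) - 1| * min (|x|) (1/m)) := by
  rcases le_total (|x|) (1/m) with hmin | hmin
  · rw [min_eq_left hmin]; exact bd4O
  · rw [min_eq_right hmin, abs_mul, one_div]
    have h1 : |Real.sin (z*x)| ≤ 1 := Real.abs_sin_le_one _
    have key : |Real.exp (-ζ*x) - 1| * |Real.sin (z*x)| ≤ |Real.exp (-ζ*x) - 1| * 1 :=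
      mul_le_mul_of_nonneg_left h1 (abs_nonneg _)
    have hinv : (1:ℝ) ≤ m⁻¹ * |z| := by
      rw [← div_eq_inv_mul, le_div_iff₀ hm]; linarith
    have h5 : |Real.exp (-ζ*x) - 1| ≤ |Real.exp (-ζ*x) - 1| * (m⁻¹ * |z|) :=
      le_mul_of_one_le_right (abs_nonneg _) hinv
    have heq : |Real.exp (-ζ*x) - 1| * (m⁻¹ * |z|) = |z| * (|Real.exp (-ζ*x) - 1| * m⁻¹) := by ring
    linarith
end bounds


section cplx
variable {l : ℂ} {x ζ : ℝ}

lemma cabs_mul_ofReal (l : ℂ) (x : ℝ) : ‖l * (x:ℂ)‖ = ‖l‖ * |x| := by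
  rw [norm_mul, Complex.norm_real, Real.norm_eq_abs]

lemma cre_mul_ofReal (l : ℂ) (x : ℝ) : (l * (x:ℂ)).re = l.re * x := by
  simp [Complex.mul_re]

lemma cbd_triangle (w : ℂ) : ‖Complex.exp w - 1 - w‖ ≤ Real.exp w.re + 1 + ‖w‖ := by
  calc ‖Complex.exp w - 1 - w‖ ≤ ‖Complex.exp w - 1‖ + ‖w‖ := norm_sub_le _ _
    _ ≤ ‖Complex.exp w‖ + ‖(1:ℂ)‖ + ‖w‖ := by linarith [norm_sub_le (Complex.exp w) 1]
    _ = Real.exp w.re + 1 + ‖w‖ := by rw [Complex.norm_exp, norm_one]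

lemma cbd_sq {w : ℂ} (hw : ‖w‖ ≤ 1) : ‖Complex.exp w - 1 - w‖ ≤ ‖w‖^2 := by
  have := Complex.norm_exp_sub_one_sub_id_le (x := w) hw
  exact this

lemma cbd1 (hx : x ≤ 0) (hre : 0 ≤ l.re) :
    ‖Complex.exp (l*x) - 1 - l*x‖ ≤ 3 * ‖l‖^2 * x^2 := by
  rcases le_total (‖l * (x:ℂ)‖) 1 with h | h
  · calc ‖Complex.exp (l*x) - 1 - l*x‖ ≤ ‖l * (x:ℂ)‖^2 := cbd_sq h
      _ = ‖l‖^2 * x^2 := by rw [cabs_mul_ofReal, mul_pow, _root_.sq_abs]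
      _ ≤ 3 * ‖l‖^2 * x^2 := by nlinarith [sq_nonneg ‖l‖, sq_nonneg x, mul_nonneg (mul_nonneg (sq_nonneg ‖l‖) (sq_nonneg x)) (by norm_num : (0:ℝ) ≤ 2)]
  · have h2 := cbd_triangle (l * x)
    rw [cre_mul_ofReal, cabs_mul_ofReal] at h2
    have h3 : Real.exp (l.re * x) ≤ 1 := Real.exp_le_one_iff.mpr (by nlinarith)
    rw [cabs_mul_ofReal] at h
    have hA : (1:ℝ) ≤ ‖l‖ * |x| := h
    have heq : (‖l‖ * |x|)^2 = ‖l‖^2 * x^2 := by rw [mul_pow, _root_.sq_abs]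
    nlinarith [hA]

lemma cbd2a (hζ : 0 ≤ ζ) (hx : x < -1) (hre : l.re = -ζ) :
    ‖Complex.exp (l*x) - 1 - l*x‖ ≤ (2 + ‖l‖) * (|x| * Real.exp (-ζ*x)) := by
  have h2 := cbd_triangle (l * x)
  rw [cre_mul_ofReal, cabs_mul_ofReal, hre] at h2
  have hxabs : |x| = -x := abs_of_neg (by linarith)
  have hx1 : (1:ℝ) ≤ |x| := by rw [hxabs]; linarith
  have hexp1 : (1:ℝ) ≤ Real.exp (-ζ*x) := Real.one_le_exp (by nlinarith)
  have he : Real.exp (-ζ*x) ≤ |x| * Real.exp (-ζ*x) :=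
    le_mul_of_one_le_left (Real.exp_pos _).le hx1
  have h1' : (1:ℝ) ≤ |x| * Real.exp (-ζ*x) := by nlinarith
  have hl : ‖l‖ * |x| ≤ ‖l‖ * (|x| * Real.exp (-ζ*x)) := by
    apply mul_le_mul_of_nonneg_left _ (norm_nonneg l)
    exact le_mul_of_one_le_right (abs_nonneg x) hexp1
  have harg : -ζ * x = -(ζ * x) := by ring
  calc ‖Complex.exp (l*x) - 1 - l*x‖ ≤ Real.exp (-ζ*x) + 1 + ‖l‖ * |x| := by
        rw [harg] at h2 ⊢; linarith [h2]
    _ ≤ (2 + ‖l‖) * (|x| * Real.exp (-ζ*x)) := by nlinarith [norm_nonneg l]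

lemma cbd2b (hζ : 0 ≤ ζ) (hx1 : -1 ≤ x) (hx0 : x ≤ 0) (hre : l.re = -ζ) :
    ‖Complex.exp (l*x) - 1 - l*x‖ ≤ (Real.exp ζ + 2) * ‖l‖^2 * x^2 := by
  rcases le_total (‖l * (x:ℂ)‖) 1 with h | h
  · calc ‖Complex.exp (l*x) - 1 - l*x‖ ≤ ‖l * (x:ℂ)‖^2 := cbd_sq h
      _ = ‖l‖^2 * x^2 := by rw [cabs_mul_ofReal, mul_pow, _root_.sq_abs]
      _ ≤ (Real.exp ζ + 2) * ‖l‖^2 * x^2 := by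
          nlinarith [Real.exp_pos ζ, mul_nonneg (sq_nonneg ‖l‖) (sq_nonneg x),
            mul_nonneg (mul_nonneg (Real.exp_pos ζ).le (sq_nonneg ‖l‖)) (sq_nonneg x)]
  · have h2 := cbd_triangle (l * x)
    rw [cre_mul_ofReal, cabs_mul_ofReal, hre] at h2
    have h3 : Real.exp (-ζ * x) ≤ Real.exp ζ := Real.exp_le_exp.mpr (by nlinarith)
    rw [cabs_mul_ofReal] at h
    have heq : (‖l‖ * |x|)^2 = ‖l‖^2 * x^2 := by rw [mul_pow, _root_.sq_abs]
    have hP : (0:ℝ) ≤ (Real.exp ζ) * ((‖l‖*|x|)^2 - 1) :=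
      mul_nonneg (Real.exp_pos ζ).le (by nlinarith [sq_nonneg (‖l‖*|x| - 1)])
    nlinarith [sq_nonneg (‖l‖*|x| - 1), Real.exp_pos ζ]
end cplx


section meas
variable {ζ : ℝ} {ν : Measure ℝ}

lemma W_cont (ζ : ℝ) : Continuous (fun x : ℝ => |Real.exp (-ζ*x) - 1| * |x|) := by fun_prop

lemma W_integrable (hζ : 0 ≤ ζ) (hν2 : Integrable (fun x : ℝ => x ^ 2) ν)
    (hνexp : IntegrableOn (fun x : ℝ => |x| * Real.exp (-ζ * x)) (Set.Iio (-1 : ℝ)) ν) :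
    Integrable (fun x : ℝ => |Real.exp (-ζ*x) - 1| * |x|) ν := by
  rw [← integrableOn_univ, ← Set.Iio_union_Ici (a := (-1:ℝ)), integrableOn_union]
  constructor
  · apply hνexp.mono' (W_cont ζ).aestronglyMeasurable
    filter_upwards [ae_restrict_mem measurableSet_Iio] with x hx
    have hx' : x < -1 := hx
    have h1 : (1:ℝ) ≤ Real.exp (-ζ*x) := Real.one_le_exp (by nlinarith)
    have h2 : |Real.exp (-ζ*x) - 1| ≤ Real.exp (-ζ*x) := by
      rw [_root_.abs_of_nonneg (by linarith)]; linarith [Real.exp_pos (-ζ*x)]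
    rw [Real.norm_eq_abs, _root_.abs_of_nonneg (by positivity)]
    calc |Real.exp (-ζ*x) - 1| * |x| ≤ Real.exp (-ζ*x) * |x| :=
          mul_le_mul_of_nonneg_right h2 (abs_nonneg x)
      _ = |x| * Real.exp (-ζ*x) := by ring
  · apply ((hν2.const_mul (ζ * Real.exp ζ)).integrableOn).mono'
      (W_cont ζ).aestronglyMeasurable
    filter_upwards [ae_restrict_mem measurableSet_Ici] with x hx
    have hx1 : (-1:ℝ) ≤ x := hx
    rw [Real.norm_eq_abs, _root_.abs_of_nonneg (by positivity)]
    rcases le_total x 0 with hx0 | hx0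
    · have hE0 : (0:ℝ) ≤ Real.exp (-ζ*x) - 1 := by
        have : (1:ℝ) ≤ Real.exp (-ζ*x) := Real.one_le_exp (by nlinarith)
        linarith
      have hE1 : Real.exp (-ζ*x) - 1 ≤ (-ζ*x) * Real.exp (-ζ*x) :=
        my_exp_sub_one_le (by nlinarith)
      have hE2 : Real.exp (-ζ*x) ≤ Real.exp ζ := Real.exp_le_exp.mpr (by nlinarith)
      have h6 : (-ζ*x) * Real.exp (-ζ*x) ≤ (ζ * (-x)) * Real.exp ζ := by
        have h7 : (0:ℝ) ≤ ζ * (-x) := mul_nonneg hζ (by linarith)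
        calc (-ζ*x) * Real.exp (-ζ*x) = (ζ*(-x)) * Real.exp (-ζ*x) := by ring
          _ ≤ (ζ*(-x)) * Real.exp ζ := mul_le_mul_of_nonneg_left hE2 h7
      calc |Real.exp (-ζ*x) - 1| * |x| = (Real.exp (-ζ*x) - 1) * (-x) := by
            rw [_root_.abs_of_nonneg hE0, _root_.abs_of_nonpos hx0]
        _ ≤ ((ζ*(-x)) * Real.exp ζ) * (-x) :=
            mul_le_mul_of_nonneg_right (le_trans hE1 h6) (by linarith)
        _ = ζ * Real.exp ζ * x^2 := by ring
    · have hE : |Real.exp (-ζ*x) - 1| ≤ ζ * x := by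
        have := my_abs_exp_sub_one_le (t := -ζ*x) (by nlinarith)
        rwa [show |(-ζ*x)| = ζ * x by rw [_root_.abs_of_nonpos (by nlinarith)]; ring] at this
      calc |Real.exp (-ζ*x) - 1| * |x| ≤ (ζ*x) * |x| :=
            mul_le_mul_of_nonneg_right hE (abs_nonneg x)
        _ = ζ * x^2 := by rw [_root_.abs_of_nonneg hx0]; ring
        _ ≤ ζ * Real.exp ζ * x^2 := by nlinarith [mul_nonneg (mul_nonneg hζ (sq_nonneg x)) (sub_nonneg.mpr (Real.one_le_exp hζ))]

lemma minA_integrable (hν2 : Integrable (fun x : ℝ => x ^ 2) ν) {m : ℝ} (hm : 0 < m) :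
    Integrable (fun x : ℝ => min (x^2) (|x|/m)) ν := by
  have c1 : Continuous fun x : ℝ => min (x^2) (|x|/m) :=
    (continuous_pow 2).min (continuous_abs.div_const m)
  apply hν2.mono' c1.aestronglyMeasurable
  filter_upwards with x
  rw [Real.norm_eq_abs, _root_.abs_of_nonneg (le_min (sq_nonneg x) (by positivity))]
  exact min_le_left _ _

lemma minB_integrable (hζ : 0 ≤ ζ) (hν2 : Integrable (fun x : ℝ => x ^ 2) ν)
    (hνexp : IntegrableOn (fun x : ℝ => |x| * Real.exp (-ζ * x)) (Set.Iio (-1 : ℝ)) ν)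
    {m : ℝ} (hm : 0 < m) :
    Integrable (fun x : ℝ => |Real.exp (-ζ*x) - 1| * min (|x|) (1/m)) ν := by
  have c1 : Continuous fun x : ℝ => |Real.exp (-ζ*x) - 1| * min (|x|) (1/m) :=
    ((by fun_prop : Continuous fun x : ℝ => Real.exp (-ζ*x) - 1).abs).mul
      (continuous_abs.min continuous_const)
  apply (W_integrable hζ hν2 hνexp).mono' c1.aestronglyMeasurable
  filter_upwards with x
  rw [Real.norm_eq_abs, _root_.abs_of_nonneg (by positivity)]
  exact mul_le_mul_of_nonneg_left (min_le_left _ _) (abs_nonneg _)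

lemma epsA_tendsto (hν2 : Integrable (fun x : ℝ => x ^ 2) ν) :
    Tendsto (fun n : ℕ => ∫ x, min (x^2) (|x| / ((n:ℝ)+1)) ∂ν) atTop (nhds 0) := by
  have h0 : (0:ℝ) = ∫ _x : ℝ, (0:ℝ) ∂ν := by simp
  rw [h0]
  apply tendsto_integral_of_dominated_convergence (fun x => x^2)
    (fun n => ((continuous_pow 2).min (continuous_abs.div_const ((n:ℝ)+1))).aestronglyMeasurable)
    hν2
  · intro n
    filter_upwards with x
    rw [Real.norm_eq_abs, _root_.abs_of_nonneg (le_min (sq_nonneg x) (by positivity))]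
    exact min_le_left _ _
  · filter_upwards with x
    have hdiv : Tendsto (fun n : ℕ => |x| / ((n:ℝ)+1)) atTop (nhds 0) := by
      have := tendsto_one_div_add_atTop_nhds_zero_nat.const_mul |x|
      simpa [div_eq_mul_inv, mul_comm, one_div] using this
    have := (tendsto_const_nhds (x := x^2) (f := atTop (α := ℕ))).min hdiv
    rwa [min_eq_right (sq_nonneg x)] at this

lemma epsB_tendsto (hζ : 0 ≤ ζ) (hν2 : Integrable (fun x : ℝ => x ^ 2) ν)
    (hνexp : IntegrableOn (fun x : ℝ => |x| * Real.exp (-ζ * x)) (Set.Iio (-1 : ℝ)) ν) :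
    Tendsto (fun n : ℕ => ∫ x, |Real.exp (-ζ*x) - 1| * min (|x|) (1/((n:ℝ)+1)) ∂ν)
      atTop (nhds 0) := by
  have h0 : (0:ℝ) = ∫ _x : ℝ, (0:ℝ) ∂ν := by simp
  rw [h0]
  apply tendsto_integral_of_dominated_convergence (fun x => |Real.exp (-ζ*x) - 1| * |x|)
    (fun n => (((by fun_prop : Continuous fun x : ℝ => Real.exp (-ζ*x) - 1).abs).mul
      (continuous_abs.min continuous_const)).aestronglyMeasurable)
    (W_integrable hζ hν2 hνexp)
  · intro n
    filter_upwards with x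
    rw [Real.norm_eq_abs, _root_.abs_of_nonneg
      (mul_nonneg (abs_nonneg _) (le_min (abs_nonneg _) (by positivity)))]
    exact mul_le_mul_of_nonneg_left (min_le_left _ _) (abs_nonneg _)
  · filter_upwards with x
    have hdiv : Tendsto (fun n : ℕ => min (|x|) (1/((n:ℝ)+1))) atTop (nhds 0) := by
      have := (tendsto_const_nhds (x := |x|) (f := atTop (α := ℕ))).min
        tendsto_one_div_add_atTop_nhds_zero_nat
      rwa [min_eq_right (abs_nonneg x)] at this
    have := hdiv.const_mul (|Real.exp (-ζ*x) - 1|)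
    simpa using this
end meas


section ims
variable {u v z ζ x : ℝ}

lemma im1 (v u x : ℝ) :
    (Complex.exp (((v:ℂ) + Complex.I*(u:ℂ)) * (x:ℂ)) - 1
      - ((v:ℂ) + Complex.I*(u:ℂ)) * (x:ℂ)).im
    = Real.exp (v*x) * Real.sin (u*x) - u*x := by
  simp [Complex.exp_im, Complex.sub_im, Complex.mul_im, Complex.mul_re, Complex.add_re,
    Complex.add_im, Complex.I_re, Complex.I_im, Complex.ofReal_re, Complex.ofReal_im,
    Complex.one_im]

lemma im2 (ζ z x : ℝ) :
    (Complex.exp ((-(ζ:ℂ) - Complex.I*(z:ℂ)) * (x:ℂ)) - 1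
      - (-(ζ:ℂ) - Complex.I*(z:ℂ)) * (x:ℂ)).im
    = -(Real.exp (-ζ*x) * Real.sin (z*x)) + z*x := by
  simp [Complex.exp_im, Complex.sub_im, Complex.mul_im, Complex.mul_re, Complex.sub_re,
    Complex.neg_re, Complex.neg_im, Complex.add_re, Complex.add_im, Complex.I_re,
    Complex.I_im, Complex.ofReal_re, Complex.ofReal_im, Complex.one_im, Real.sin_neg]

lemma ptwise (u v z ζ x : ℝ) :
    (Real.exp (v*x) * Real.sin (u*x) - u*x) - (-(Real.exp (-ζ*x) * Real.sin (z*x)) + z*x)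
    = (Real.exp (v*x) - 1) * Real.sin (u*x)
      + 2 * (Real.sin ((u+z)/2*x) * (Real.cos ((u-z)/2*x) - 1))
      + 2 * (Real.sin ((u+z)/2*x) - (u+z)/2*x)
      + (Real.exp (-ζ*x) - 1) * Real.sin (z*x) := by
  have hs : Real.sin (u*x) + Real.sin (z*x)
      = 2 * Real.sin ((u+z)/2*x) * Real.cos ((u-z)/2*x) := by
    have h1 := Real.sin_add ((u+z)/2*x) ((u-z)/2*x)
    have h2 := Real.sin_sub ((u+z)/2*x) ((u-z)/2*x)
    rw [show (u+z)/2*x + (u-z)/2*x = u*x by ring] at h1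
    rw [show (u+z)/2*x - (u-z)/2*x = z*x by ring] at h2
    linarith
  linear_combination hs

lemma psi_im (μ σ : ℝ) {ν : Measure ℝ} (l : ℂ)
    (hF : Integrable (fun x : ℝ => Complex.exp (l * (x:ℂ)) - 1 - l * (x:ℂ)) ν) :
    (psi μ σ ν l).im = μ * l.im + σ^2/2 * (l^2).im
      + ∫ x : ℝ, (Complex.exp (l * (x:ℂ)) - 1 - l * (x:ℂ)).im ∂ν := by
  have h1 : (∫ x : ℝ, (Complex.exp (l * (x:ℂ)) - 1 - l * (x:ℂ)) ∂ν).im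
      = ∫ x : ℝ, (Complex.exp (l * (x:ℂ)) - 1 - l * (x:ℂ)).im ∂ν := by
    have := Complex.imCLM.integral_comp_comm hF
    simpa using this.symm
  rw [psi, Complex.add_im, Complex.add_im, h1]
  congr 2
  · simp [Complex.im_ofReal_mul]
  · have : ((σ:ℂ)^2/2) = (((σ^2/2 : ℝ)):ℂ) := by push_cast; ring
    rw [this, Complex.im_ofReal_mul]
end ims

/-- Lemma 2: alternative expansion of `Im(ψ(v+iu) − ψ(−ζ−iz))`. -/
theorem stmt_1 (μ σ ζ : ℝ) (ν : Measure ℝ) [SigmaFinite ν]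
    (hσ : 0 < σ) (hζ : 0 ≤ ζ)
    (hνsupp : ν (Set.Ici (0 : ℝ)) = 0)
    (hν2 : Integrable (fun x : ℝ => x ^ 2) ν)
    (hνexp : IntegrableOn (fun x : ℝ => |x| * Real.exp (-ζ * x)) (Set.Iio (-1 : ℝ)) ν) :
    ∃ R₁ R₂ R₃ R₄ : ℝ → ℝ → ℝ → ℝ,
      IsRem R₁ (fun u v _ => u * v) ∧
      IsRem R₂ (fun u _ z => z ^ 2 - u ^ 2) ∧
      (∀ (u z : ℝ) (v : ℝ), 0 < v → 0 ≤ (z + u) * R₃ u v z) ∧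
      IsRem R₃ (fun u _ z => (z + u) ^ 2) ∧
      IsRem R₄ (fun _ _ z => z) ∧
      ∀ (u z : ℝ) (v : ℝ), 0 < v →
        (psi μ σ ν ((v : ℂ) + Complex.I * (u : ℂ)) -
            psi μ σ ν (-(ζ : ℂ) - Complex.I * (z : ℂ))).im
          = μ * (u + z) + (v * u - z * ζ) * σ ^ 2
            + R₁ u v z + R₂ u v z + R₃ u v z + R₄ u v z := by
  have hae : ∀ᵐ x ∂ν, x < 0 := by
    have h := measure_eq_zero_iff_ae_notMem.mp hνsupp
    filter_upwards [h] with x hx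
    simpa [Set.mem_Ici, not_le] using hx
  have hW : Integrable (fun x : ℝ => |Real.exp (-ζ*x) - 1| * |x|) ν :=
    W_integrable hζ hν2 hνexp
  have hK : (0:ℝ) ≤ ∫ x, x^2 ∂ν := integral_nonneg fun x => sq_nonneg x
  have hL : (0:ℝ) ≤ ∫ x, |Real.exp (-ζ*x) - 1| * |x| ∂ν :=
    integral_nonneg fun x => by positivity
  -- integrability of the four real integrands
  have hf1int : ∀ u v : ℝ, 0 < v →
      Integrable (fun x => (Real.exp (v*x) - 1) * Real.sin (u*x)) ν := by
    intro u v hv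
    apply (hν2.const_mul (|u| * v)).mono' (Continuous.aestronglyMeasurable (by fun_prop))
    filter_upwards [hae] with x hx
    rw [Real.norm_eq_abs]; exact bd1O hx.le hv
  have hf2int : ∀ s d : ℝ,
      Integrable (fun x => 2 * (Real.sin (s*x) * (Real.cos (d*x) - 1))) ν := by
    intro s d
    apply (hν2.const_mul (2 * |s| * |d|)).mono' (Continuous.aestronglyMeasurable (by fun_prop))
    filter_upwards with x
    rw [Real.norm_eq_abs]; exact bd2O
  have hf3int : ∀ t : ℝ,
      Integrable (fun x => 2 * (Real.sin (t*x) - t*x)) ν := by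
    intro t
    apply (hν2.const_mul (2*t^2)).mono' (Continuous.aestronglyMeasurable (by fun_prop))
    filter_upwards with x
    rw [Real.norm_eq_abs]; exact bd3O
  have hf4int : ∀ z : ℝ,
      Integrable (fun x => (Real.exp (-ζ*x) - 1) * Real.sin (z*x)) ν := by
    intro z
    apply (hW.const_mul |z|).mono' (Continuous.aestronglyMeasurable (by fun_prop))
    filter_upwards with x
    rw [Real.norm_eq_abs]; exact bd4O
  -- integrability of the complex integrands
  have hcont : ∀ l : ℂ, Continuous (fun x : ℝ => Complex.exp (l * (x:ℂ)) - 1 - l * (x:ℂ)) := by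
    intro l
    exact ((Complex.continuous_exp.comp (continuous_const.mul Complex.continuous_ofReal)).sub
      continuous_const).sub (continuous_const.mul Complex.continuous_ofReal)
  have hF1 : ∀ u v : ℝ, 0 < v → Integrable (fun x : ℝ =>
      Complex.exp (((v:ℂ) + Complex.I*(u:ℂ)) * (x:ℂ)) - 1
        - ((v:ℂ) + Complex.I*(u:ℂ)) * (x:ℂ)) ν := by
    intro u v hv
    apply (hν2.const_mul (3*‖((v:ℂ) + Complex.I*(u:ℂ))‖^2)).mono'
      (hcont _).aestronglyMeasurable
    filter_upwards [hae] with x hx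
    have hre : (0:ℝ) ≤ ((v:ℂ) + Complex.I*(u:ℂ)).re := by
      simp [Complex.add_re, Complex.mul_re]
      linarith
    exact cbd1 hx.le hre
  have hF2 : ∀ z : ℝ, Integrable (fun x : ℝ =>
      Complex.exp ((-(ζ:ℂ) - Complex.I*(z:ℂ)) * (x:ℂ)) - 1
        - (-(ζ:ℂ) - Complex.I*(z:ℂ)) * (x:ℂ)) ν := by
    intro z
    have hre : (-(ζ:ℂ) - Complex.I*(z:ℂ)).re = -ζ := by
      simp [Complex.sub_re, Complex.neg_re, Complex.mul_re]
    rw [← integrableOn_univ, ← Set.Iio_union_Ici (a := (-1:ℝ)), integrableOn_union]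
    constructor
    · apply (hνexp.const_mul (2 + ‖(-(ζ:ℂ) - Complex.I*(z:ℂ))‖)).mono'
        (hcont _).aestronglyMeasurable
      filter_upwards [ae_restrict_mem measurableSet_Iio] with x hx
      exact cbd2a hζ hx hre
    · apply ((hν2.const_mul ((Real.exp ζ + 2) * ‖(-(ζ:ℂ) - Complex.I*(z:ℂ))‖^2)).integrableOn).mono'
        (hcont _).aestronglyMeasurable
      filter_upwards [ae_restrict_mem measurableSet_Ici, ae_restrict_of_ae hae] with x hx1 hx0
      have := cbd2b hζ hx1 hx0.le hre
      calc ‖Complex.exp ((-(ζ:ℂ) - Complex.I*(z:ℂ)) * (x:ℂ)) - 1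
          - (-(ζ:ℂ) - Complex.I*(z:ℂ)) * (x:ℂ)‖
          ≤ (Real.exp ζ + 2) * ‖(-(ζ:ℂ) - Complex.I*(z:ℂ))‖^2 * x^2 := this
        _ = (Real.exp ζ + 2) * ‖(-(ζ:ℂ) - Complex.I*(z:ℂ))‖^2 * x^2 := rfl
  refine ⟨fun u v _z => ∫ x, (Real.exp (v*x) - 1) * Real.sin (u*x) ∂ν,
          fun u _v z => ∫ x, 2 * (Real.sin ((u+z)/2*x) * (Real.cos ((u-z)/2*x) - 1)) ∂ν,
          fun u _v z => ∫ x, 2 * (Real.sin ((u+z)/2*x) - (u+z)/2*x) ∂ν,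
          fun _u _v z => ∫ x, (Real.exp (-ζ*x) - 1) * Real.sin (z*x) ∂ν,
          ?_, ?_, ?_, ?_, ?_, ?_⟩
  · -- IsRem R₁
    constructor
    · refine ⟨∫ x, x^2 ∂ν, fun u z v hv => ?_⟩
      have hb := norm_integral_le_of_norm_le (hν2.const_mul (|u| * v))
        (hae.mono fun x hx => by rw [Real.norm_eq_abs]; exact bd1O (u := u) hx.le hv)
      rw [Real.norm_eq_abs, integral_const_mul] at hb
      calc |∫ x, (Real.exp (v*x) - 1) * Real.sin (u*x) ∂ν|
          ≤ (|u| * v) * ∫ x, x^2 ∂ν := hb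
        _ = (∫ x, x^2 ∂ν) * |u*v| := by rw [abs_mul, _root_.abs_of_pos hv]; ring
    · intro δ hδ
      obtain ⟨n, hn⟩ := ((epsA_tendsto hν2).eventually (gt_mem_nhds hδ)).exists
      refine ⟨((n:ℝ)+1)^2, by positivity, fun u z v hv hM => ?_⟩
      have hmax : ((n:ℝ)+1) ≤ v ∨ ((n:ℝ)+1) ≤ |u| := by
        by_contra hcon
        push_neg at hcon
        rw [abs_mul, _root_.abs_of_pos hv] at hM
        nlinarith [abs_nonneg u, hcon.1, hcon.2]
      have hb := norm_integral_le_of_norm_le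
        ((minA_integrable hν2 (show (0:ℝ) < (n:ℝ)+1 by positivity)).const_mul (|u| * v))
        (hae.mono fun x hx => by
          rw [Real.norm_eq_abs]; exact bd1 hx.le hv (by positivity) hmax)
      rw [Real.norm_eq_abs, integral_const_mul] at hb
      calc |∫ x, (Real.exp (v*x) - 1) * Real.sin (u*x) ∂ν|
          ≤ (|u| * v) * ∫ x, min (x^2) (|x|/((n:ℝ)+1)) ∂ν := hb
        _ ≤ (|u| * v) * δ := mul_le_mul_of_nonneg_left hn.le (by positivity)
        _ = δ * |u*v| := by rw [abs_mul, _root_.abs_of_pos hv]; ring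
  · -- IsRem R₂
    have habs : ∀ u z : ℝ, 4 * |(u+z)/2| * |(u-z)/2| = |z^2-u^2| := by
      intro u z
      rw [abs_div, abs_div, _root_.abs_two]
      rw [show 4*(|u+z|/2)*(|u-z|/2) = |u+z| * |u-z| by ring, ← abs_mul,
        show (u+z)*(u-z) = -(z^2-u^2) by ring, abs_neg]
    constructor
    · refine ⟨∫ x, x^2 ∂ν, fun u z v hv => ?_⟩
      have hb := norm_integral_le_of_norm_le (hν2.const_mul (2 * |(u+z)/2| * |(u-z)/2|))
        (Eventually.of_forall fun x => by rw [Real.norm_eq_abs]; exact bd2O)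
      rw [Real.norm_eq_abs] at hb
      have hmull : (∫ x, 2 * |(u+z)/2| * |(u-z)/2| * x^2 ∂ν)
          = 2 * |(u+z)/2| * |(u-z)/2| * ∫ x, x^2 ∂ν := integral_const_mul _ _
      rw [hmull] at hb
      have h2 : 2 * |(u+z)/2| * |(u-z)/2| ≤ |z^2-u^2| := by
        rw [← habs u z]
        nlinarith [abs_nonneg ((u+z)/2), abs_nonneg ((u-z)/2),
          mul_nonneg (abs_nonneg ((u+z)/2)) (abs_nonneg ((u-z)/2))]
      calc |∫ x, 2 * (Real.sin ((u+z)/2*x) * (Real.cos ((u-z)/2*x) - 1)) ∂ν|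
          ≤ (2 * |(u+z)/2| * |(u-z)/2|) * ∫ x, x^2 ∂ν := hb
        _ ≤ |z^2-u^2| * ∫ x, x^2 ∂ν := mul_le_mul_of_nonneg_right h2 hK
        _ = (∫ x, x^2 ∂ν) * |z^2-u^2| := by ring
    · intro δ hδ
      obtain ⟨n, hn⟩ := ((epsA_tendsto hν2).eventually (gt_mem_nhds hδ)).exists
      refine ⟨4*((n:ℝ)+1)^2, by positivity, fun u z v hv hM => ?_⟩
      have hM' : 4*((n:ℝ)+1)^2 ≤ 4 * |(u+z)/2| * |(u-z)/2| := by rw [habs u z]; exact hM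
      have hmax : ((n:ℝ)+1) ≤ |(u+z)/2| ∨ ((n:ℝ)+1) ≤ |(u-z)/2| := by
        by_contra hcon
        push_neg at hcon
        nlinarith [abs_nonneg ((u+z)/2), abs_nonneg ((u-z)/2), hcon.1, hcon.2]
      have hb := norm_integral_le_of_norm_le
        ((minA_integrable hν2 (show (0:ℝ) < (n:ℝ)+1 by positivity)).const_mul
          (4 * |(u+z)/2| * |(u-z)/2|))
        (Eventually.of_forall fun x => by
          rw [Real.norm_eq_abs]; exact bd2 (by positivity) hmax)
      rw [Real.norm_eq_abs] at hb
      have hmull : (∫ x, 4 * |(u+z)/2| * |(u-z)/2| * min (x^2) (|x|/((n:ℝ)+1)) ∂ν)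
          = 4 * |(u+z)/2| * |(u-z)/2| * ∫ x, min (x^2) (|x|/((n:ℝ)+1)) ∂ν :=
        integral_const_mul _ _
      rw [hmull] at hb
      calc |∫ x, 2 * (Real.sin ((u+z)/2*x) * (Real.cos ((u-z)/2*x) - 1)) ∂ν|
          ≤ (4 * |(u+z)/2| * |(u-z)/2|) * ∫ x, min (x^2) (|x|/((n:ℝ)+1)) ∂ν := hb
        _ ≤ (4 * |(u+z)/2| * |(u-z)/2|) * δ := by
            apply mul_le_mul_of_nonneg_left hn.le
            positivity
        _ = δ * |z^2-u^2| := by rw [← habs u z]; ring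
  · -- sign of R₃
    intro u z v hv
    rw [← integral_const_mul]
    apply integral_nonneg_of_ae
    filter_upwards [hae] with x hx
    simp only [Pi.zero_apply]
    rcases le_total 0 (z+u) with hzu | hzu
    · have ht : (0:ℝ) ≤ (u+z)/2 := by linarith
      have htx : (u+z)/2*x ≤ 0 := mul_nonpos_of_nonneg_of_nonpos ht hx.le
      have := Real.le_sin htx
      apply mul_nonneg hzu
      linarith
    · have ht : (u+z)/2 ≤ 0 := by linarith
      have htx : 0 ≤ (u+z)/2*x := by
        nlinarith [mul_nonneg (neg_nonneg.mpr ht) (neg_nonneg.mpr hx.le)]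
      have hsin := Real.sin_le htx
      have h2 : 2*(Real.sin ((u+z)/2*x) - (u+z)/2*x) ≤ 0 := by linarith
      nlinarith [mul_nonneg (neg_nonneg.mpr hzu) (neg_nonneg.mpr h2)]
  · -- IsRem R₃
    constructor
    · refine ⟨∫ x, x^2 ∂ν, fun u z v hv => ?_⟩
      have hb := norm_integral_le_of_norm_le (hν2.const_mul (2*((u+z)/2)^2))
        (Eventually.of_forall fun x => by rw [Real.norm_eq_abs]; exact bd3O)
      rw [Real.norm_eq_abs] at hb
      have hmull : (∫ x, 2*((u+z)/2)^2 * x^2 ∂ν)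
          = 2*((u+z)/2)^2 * ∫ x, x^2 ∂ν := integral_const_mul _ _
      rw [hmull] at hb
      have habs : |(z+u)^2| = (z+u)^2 := _root_.abs_of_nonneg (sq_nonneg _)
      calc |∫ x, 2 * (Real.sin ((u+z)/2*x) - (u+z)/2*x) ∂ν|
          ≤ (2*((u+z)/2)^2) * ∫ x, x^2 ∂ν := hb
        _ ≤ (z+u)^2 * ∫ x, x^2 ∂ν := by nlinarith [sq_nonneg (u+z), hK]
        _ = (∫ x, x^2 ∂ν) * |(z+u)^2| := by rw [habs]; ring
    · intro δ hδ
      obtain ⟨n, hn⟩ := ((epsA_tendsto hν2).eventually (gt_mem_nhds hδ)).exists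
      refine ⟨(2*((n:ℝ)+1))^2, by positivity, fun u z v hv hM => ?_⟩
      rw [_root_.abs_of_nonneg (sq_nonneg (z+u))] at hM
      have ht : ((n:ℝ)+1) ≤ |(u+z)/2| := by
        rw [abs_div, _root_.abs_two, le_div_iff₀ (by norm_num : (0:ℝ) < 2)]
        nlinarith [_root_.sq_abs (u+z), abs_nonneg (u+z)]
      have hb := norm_integral_le_of_norm_le
        ((minA_integrable hν2 (show (0:ℝ) < (n:ℝ)+1 by positivity)).const_mul
          (4*((u+z)/2)^2))
        (Eventually.of_forall fun x => by
          rw [Real.norm_eq_abs]; exact bd3 (by positivity) ht)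
      rw [Real.norm_eq_abs] at hb
      have hmull : (∫ x, 4*((u+z)/2)^2 * min (x^2) (|x|/((n:ℝ)+1)) ∂ν)
          = 4*((u+z)/2)^2 * ∫ x, min (x^2) (|x|/((n:ℝ)+1)) ∂ν := integral_const_mul _ _
      rw [hmull] at hb
      have h42 : 4*((u+z)/2)^2 = (z+u)^2 := by ring
      calc |∫ x, 2 * (Real.sin ((u+z)/2*x) - (u+z)/2*x) ∂ν|
          ≤ (4*((u+z)/2)^2) * ∫ x, min (x^2) (|x|/((n:ℝ)+1)) ∂ν := hb
        _ ≤ (4*((u+z)/2)^2) * δ := mul_le_mul_of_nonneg_left hn.le (by positivity)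
        _ = δ * |(z+u)^2| := by
            rw [_root_.abs_of_nonneg (sq_nonneg (z+u)), ← h42]; ring
  · -- IsRem R₄
    constructor
    · refine ⟨∫ x, |Real.exp (-ζ*x) - 1| * |x| ∂ν, fun u z v hv => ?_⟩
      have hb := norm_integral_le_of_norm_le (hW.const_mul |z|)
        (Eventually.of_forall fun x => by rw [Real.norm_eq_abs]; exact bd4O)
      rw [Real.norm_eq_abs, integral_const_mul] at hb
      have : |z| * (∫ x, |Real.exp (-ζ*x) - 1| * |x| ∂ν)
          = (∫ x, |Real.exp (-ζ*x) - 1| * |x| ∂ν) * |z| := by ring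
      linarith [hb]
    · intro δ hδ
      obtain ⟨n, hn⟩ := ((epsB_tendsto hζ hν2 hνexp).eventually (gt_mem_nhds hδ)).exists
      refine ⟨(n:ℝ)+1, by positivity, fun u z v hv hM => ?_⟩
      have hb := norm_integral_le_of_norm_le
        ((minB_integrable hζ hν2 hνexp (show (0:ℝ) < (n:ℝ)+1 by positivity)).const_mul |z|)
        (Eventually.of_forall fun x => by
          rw [Real.norm_eq_abs]; exact bd4 (by positivity) hM)
      rw [Real.norm_eq_abs, integral_const_mul] at hb
      have h7 : |z| * (∫ x, |Real.exp (-ζ*x) - 1| * min (|x|) (1/((n:ℝ)+1)) ∂ν)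
          ≤ |z| * δ := mul_le_mul_of_nonneg_left hn.le (abs_nonneg z)
      have h8 : |z| * δ = δ * |z| := by ring
      linarith [hb]
  · -- the identity
    intro u z v hv
    have e1 : (psi μ σ ν ((v:ℂ) + Complex.I*(u:ℂ))).im
        = μ * u + σ^2/2 * (2*(v*u))
          + ∫ x, (Real.exp (v*x) * Real.sin (u*x) - u*x) ∂ν := by
      rw [psi_im μ σ _ (hF1 u v hv)]
      have h1 : ((v:ℂ) + Complex.I*(u:ℂ)).im = u := by simp
      have h2 : (((v:ℂ) + Complex.I*(u:ℂ))^2).im = 2*(v*u) := by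
        simp [pow_two, Complex.mul_im, Complex.add_re, Complex.add_im, Complex.mul_re]
        ring
      rw [h1, h2]
      congr 1
      apply integral_congr_ae
      filter_upwards with x
      exact im1 v u x
    have e2 : (psi μ σ ν (-(ζ:ℂ) - Complex.I*(z:ℂ))).im
        = μ * (-z) + σ^2/2 * (2*(ζ*z))
          + ∫ x, (-(Real.exp (-ζ*x) * Real.sin (z*x)) + z*x) ∂ν := by
      rw [psi_im μ σ _ (hF2 z)]
      have h1 : (-(ζ:ℂ) - Complex.I*(z:ℂ)).im = -z := by simp
      have h2 : ((-(ζ:ℂ) - Complex.I*(z:ℂ))^2).im = 2*(ζ*z) := by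
        simp [pow_two, Complex.mul_im, Complex.sub_re, Complex.sub_im, Complex.neg_re,
          Complex.neg_im, Complex.mul_re]
        ring
      rw [h1, h2]
      congr 1
      apply integral_congr_ae
      filter_upwards with x
      exact im2 ζ z x
    have hg1 : Integrable (fun x => Real.exp (v*x) * Real.sin (u*x) - u*x) ν := by
      have h := Complex.imCLM.integrable_comp (hF1 u v hv)
      exact h.congr (Eventually.of_forall fun x => by
        simp only [Complex.imCLM_apply]; exact im1 v u x)
    have hg2 : Integrable (fun x => -(Real.exp (-ζ*x) * Real.sin (z*x)) + z*x) ν := by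
      have h := Complex.imCLM.integrable_comp (hF2 z)
      exact h.congr (Eventually.of_forall fun x => by
        simp only [Complex.imCLM_apply]; exact im2 ζ z x)
    have esub : (∫ x, (Real.exp (v*x) * Real.sin (u*x) - u*x) ∂ν)
        - (∫ x, (-(Real.exp (-ζ*x) * Real.sin (z*x)) + z*x) ∂ν)
        = (∫ x, (Real.exp (v*x) - 1) * Real.sin (u*x) ∂ν)
          + (∫ x, 2 * (Real.sin ((u+z)/2*x) * (Real.cos ((u-z)/2*x) - 1)) ∂ν)
          + (∫ x, 2 * (Real.sin ((u+z)/2*x) - (u+z)/2*x) ∂ν)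
          + (∫ x, (Real.exp (-ζ*x) - 1) * Real.sin (z*x) ∂ν) := by
      have hI2 : Integrable (fun x => (Real.exp (v*x) - 1) * Real.sin (u*x)
          + 2 * (Real.sin ((u+z)/2*x) * (Real.cos ((u-z)/2*x) - 1))) ν :=
        (hf1int u v hv).add (hf2int ((u+z)/2) ((u-z)/2))
      have hI3 : Integrable (fun x => (Real.exp (v*x) - 1) * Real.sin (u*x)
          + 2 * (Real.sin ((u+z)/2*x) * (Real.cos ((u-z)/2*x) - 1))
          + 2 * (Real.sin ((u+z)/2*x) - (u+z)/2*x)) ν := hI2.add (hf3int ((u+z)/2))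
      rw [← integral_sub hg1 hg2]
      rw [integral_congr_ae (g := fun x => (Real.exp (v*x) - 1) * Real.sin (u*x)
          + 2 * (Real.sin ((u+z)/2*x) * (Real.cos ((u-z)/2*x) - 1))
          + 2 * (Real.sin ((u+z)/2*x) - (u+z)/2*x)
          + (Real.exp (-ζ*x) - 1) * Real.sin (z*x))
        (Eventually.of_forall fun x => ptwise u v z ζ x)]
      rw [integral_add hI3 (hf4int z), integral_add hI2 (hf3int ((u+z)/2)),
        integral_add (hf1int u v hv) (hf2int ((u+z)/2) ((u-z)/2))]
    rw [Complex.sub_im, e1, e2]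
    beta_reduce
    linear_combination esub
end

section
/- For all u, z ∈ ℝ and v > 0, Re(ψ(v+iu) − ψ(−ζ−iz)) = μ(v+ζ) + (v² + z² − u²)σ²/2 + R₁(u,v,z) + R₂(u,v,z) + R₃(u,v,z) + R₄(u,v,z) + R₅(u,v,z), where R₁ is ō(z²−u²); R₂ ≥ 0 and R₂ is ō(uv); R₃ ≥ 0 and R₃ is ō(v²); R₄ is ō(z); and R₅ is uniformly bounded over all u, z ∈ ℝ, v > 0. -/
open MeasureTheory Filter Set Complex
open scoped ENNReal

section prelim

lemma lcos_diff (a b : ℝ) : |Real.cos a - Real.cos b| ≤ |a ^ 2 - b ^ 2| / 2 := by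
  rw [Real.cos_sub_cos]
  have h1 : |Real.sin ((a + b) / 2)| ≤ |(a + b) / 2| := Real.abs_sin_le_abs
  have h2 : |Real.sin ((a - b) / 2)| ≤ |(a - b) / 2| := Real.abs_sin_le_abs
  calc |(-2) * Real.sin ((a + b) / 2) * Real.sin ((a - b) / 2)|
      = 2 * (|Real.sin ((a + b) / 2)| * |Real.sin ((a - b) / 2)|) := by
        rw [abs_mul, abs_mul]; simp [abs_of_nonneg]; ring
    _ ≤ 2 * (|(a + b) / 2| * |(a - b) / 2|) := by
        nlinarith [abs_nonneg (Real.sin ((a-b)/2)), abs_nonneg ((a+b)/2)]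
    _ = |a ^ 2 - b ^ 2| / 2 := by
        rw [← abs_mul, show (a+b)/2 * ((a-b)/2) = (a^2 - b^2)/4 by ring, abs_div]
        simp [abs_of_nonneg]; ring

lemma lone_sub_cos_nonneg (t : ℝ) : 0 ≤ 1 - Real.cos t := by
  nlinarith [Real.cos_le_one t]

lemma lone_sub_cos_le_two (t : ℝ) : 1 - Real.cos t ≤ 2 := by
  nlinarith [Real.neg_one_le_cos t]

lemma lone_sub_cos_le_sq (t : ℝ) : 1 - Real.cos t ≤ t ^ 2 / 2 := by
  have h := lcos_diff 0 t
  rw [Real.cos_zero] at h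
  rw [_root_.abs_of_nonneg (lone_sub_cos_nonneg t)] at h
  calc 1 - Real.cos t ≤ |0^2 - t^2|/2 := h
    _ = t^2/2 := by rw [show (0:ℝ)^2 - t^2 = -t^2 by ring, abs_neg,
        _root_.abs_of_nonneg (sq_nonneg t)]

lemma lone_sub_cos_le_abs (t : ℝ) : 1 - Real.cos t ≤ |t| := by
  rcases le_or_gt (|t|) 2 with h | h
  · have h2 : t^2 = |t| * |t| := by rw [abs_mul_abs_self]; ring
    have := lone_sub_cos_le_sq t
    nlinarith [abs_nonneg t]
  · linarith [lone_sub_cos_le_two t]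

lemma lexp_one_le (t : ℝ) : 1 + t ≤ Real.exp t := by linarith [Real.add_one_le_exp t]

lemma lexp_quad {t : ℝ} (ht : t ≤ 0) : Real.exp t - 1 - t ≤ t ^ 2 := by
  have h1 := Real.add_one_le_exp (-t)
  have h2 := Real.exp_pos t
  rw [Real.exp_neg t] at h1
  have h4 : Real.exp t * (1 - t) ≤ 1 := by
    have := mul_le_mul_of_nonneg_left h1 h2.le
    rw [mul_inv_cancel₀ h2.ne'] at this; linarith [this]
  nlinarith

lemma lexp_le_one {t : ℝ} (ht : t ≤ 0) : Real.exp t ≤ 1 := by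
  calc Real.exp t ≤ Real.exp 0 := Real.exp_le_exp.mpr ht
    _ = 1 := Real.exp_zero

lemma lexp_lin {t : ℝ} (ht : t ≤ 0) : Real.exp t - 1 - t ≤ -t := by
  linarith [lexp_le_one ht]

lemma lexp_sub_one (s : ℝ) : Real.exp s - 1 ≤ s * Real.exp s := by
  have h1 := Real.add_one_le_exp (-s)
  have h2 := Real.exp_pos s
  rw [Real.exp_neg s] at h1
  have h4 : Real.exp s * (1 - s) ≤ 1 := by
    have := mul_le_mul_of_nonneg_left h1 h2.le
    rw [mul_inv_cancel₀ h2.ne'] at this; linarith [this]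
  nlinarith

lemma lcexp_bound (w : ℂ) : ‖Complex.exp w - 1 - w‖ ≤ (‖Complex.exp w‖ + 2) * ‖w‖ ^ 2 := by
  rcases le_or_gt (‖w‖) 1 with h | h
  · have := Complex.norm_exp_sub_one_sub_id_le (x := w) h
    nlinarith [norm_nonneg (Complex.exp w), sq_nonneg (‖w‖)]
  · have h1 : ‖Complex.exp w - 1 - w‖ ≤ ‖Complex.exp w‖ + 1 + ‖w‖ := by
      calc ‖Complex.exp w - 1 - w‖ ≤ ‖Complex.exp w - 1‖ + ‖w‖ := norm_sub_le _ _
        _ ≤ ‖Complex.exp w‖ + 1 + ‖w‖ := by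
            have := norm_sub_le (Complex.exp w) 1
            simp only [norm_one] at this; linarith
    have h2 : (1:ℝ) ≤ ‖w‖^2 := by nlinarith
    have h3 : ‖w‖ ≤ ‖w‖^2 := by nlinarith
    nlinarith [norm_nonneg (Complex.exp w)]

lemma lratio_small (ν : Measure ℝ) (g h : ℝ → ℝ) (hg : Integrable g ν)
    (hgc : Continuous g) (hhc : Continuous h)
    (hg0 : ∀ x, 0 ≤ g x) (hh0 : ∀ x, 0 ≤ h x) {δ : ℝ} (hδ : 0 < δ) :
    ∃ M : ℝ, 0 < M ∧ ∀ E : ℝ, M ≤ E → ∫ x, min (h x / E) (g x) ∂ν ≤ δ := by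
  have hmeas : ∀ E : ℝ, AEStronglyMeasurable (fun x => min (h x / E) (g x)) ν :=
    fun E => ((hhc.div_const E).min hgc).aestronglyMeasurable
  have hint : ∀ E : ℝ, 0 < E → Integrable (fun x => min (h x / E) (g x)) ν := by
    intro E hE
    refine hg.mono' (hmeas E) (ae_of_all _ fun x => ?_)
    rw [Real.norm_eq_abs, _root_.abs_of_nonneg (le_min (div_nonneg (hh0 x) (by positivity)) (hg0 x))]
    exact min_le_right _ _
  have htend : Tendsto (fun n : ℕ => ∫ x, min (h x / (n + 1)) (g x) ∂ν) atTop (nhds 0) := by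
    have := MeasureTheory.tendsto_integral_of_dominated_convergence
      (F := fun n : ℕ => fun x => min (h x / (n + 1)) (g x)) (f := fun _ => (0:ℝ))
      (bound := g) (μ := ν) (fun n => hmeas _)
      hg
      (fun n => ae_of_all _ fun x => by
        rw [Real.norm_eq_abs, _root_.abs_of_nonneg (le_min (div_nonneg (hh0 x) (by positivity)) (hg0 x))]
        exact min_le_right _ _)
      (ae_of_all _ fun x => by
        have h1 : Tendsto (fun n : ℕ => h x / (n + 1)) atTop (nhds 0) := by
          have := tendsto_one_div_add_atTop_nhds_zero_nat.const_mul (h x)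
          simpa [div_eq_mul_inv, mul_comm] using this
        have h2 : Tendsto (fun n : ℕ => min (h x / (n + 1)) (g x)) atTop (nhds 0) := by
          exact squeeze_zero (fun n => le_min (div_nonneg (hh0 x) (by positivity)) (hg0 x)) (fun n => min_le_left _ _) h1
        exact h2)
    simpa using this
  have := htend.eventually (eventually_le_nhds hδ)  -- hope: ∀ᶠ n, φ n ≤ δ? eventually_le_nhds : a < b → ∀ᶠ x in nhds a, x ≤ b
  obtain ⟨n₀, hn₀⟩ := this.exists
  refine ⟨n₀ + 1, by positivity, fun E hE => ?_⟩
  have hE0 : (0:ℝ) < E := lt_of_lt_of_le (by positivity) hE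
  calc ∫ x, min (h x / E) (g x) ∂ν ≤ ∫ x, min (h x / (n₀ + 1)) (g x) ∂ν := by
        refine integral_mono (hint E hE0) (hint _ (by positivity)) fun x => ?_
        exact min_le_min (by
          apply div_le_div_of_nonneg_left (hh0 x) (by positivity) hE
          ) le_rfl
    _ ≤ δ := hn₀
lemma lsplit {E : Type*} [NormedAddCommGroup E] {f : ℝ → E} {ν : Measure ℝ}
    (h1 : IntegrableOn f (Iio (-1)) ν) (h2 : IntegrableOn f (Ici (-1)) ν) :
    Integrable f ν := by
  rw [← integrableOn_univ, ← Iio_union_Ici (a := (-1:ℝ))]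
  exact h1.union h2

lemma lael {ν : Measure ℝ} (hνsupp : ν (Set.Ici (0 : ℝ)) = 0) : ∀ᵐ x : ℝ ∂ν, x < 0 := by
  rw [ae_iff]
  convert hνsupp using 2
  ext x; simp [not_lt]

lemma lfc (ζ : ℝ) (hζ : 0 ≤ ζ) (ν : Measure ℝ)
    (hνsupp : ν (Set.Ici (0 : ℝ)) = 0)
    (hν2 : Integrable (fun x : ℝ => x ^ 2) ν)
    (hνexp : IntegrableOn (fun x : ℝ => |x| * Real.exp (-ζ * x)) (Set.Iio (-1 : ℝ)) ν)
    (l : ℂ) (hl : -ζ ≤ l.re) :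
    Integrable (fun x : ℝ => Complex.exp (l * (x:ℂ)) - 1 - l * (x:ℂ)) ν := by
  have hcont : Continuous fun x : ℝ => Complex.exp (l * (x:ℂ)) - 1 - l * (x:ℂ) := by
    fun_prop
  have hnorm : ∀ x : ℝ, ‖l * (x:ℂ)‖ = ‖l‖ * |x| := fun x => by
    rw [norm_mul, Complex.norm_real, Real.norm_eq_abs]
  have hexpnorm : ∀ x : ℝ, ‖Complex.exp (l * (x:ℂ))‖ = Real.exp (l.re * x) := fun x => by
    rw [Complex.norm_exp]
    congr 1
    simp [Complex.mul_re]
  apply lsplit (f := fun x : ℝ => Complex.exp (l * (x:ℂ)) - 1 - l * (x:ℂ))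
  · refine ((hνexp.const_mul (2 + ‖l‖)).mono' (hcont.aestronglyMeasurable.restrict) ?_)
    rw [ae_restrict_iff' measurableSet_Iio]
    refine ae_of_all _ fun x hx => ?_
    simp only [mem_Iio] at hx
    have hx1 : (1:ℝ) ≤ |x| := by rw [abs_of_neg (by linarith)]; linarith
    have hxe : (1:ℝ) ≤ Real.exp (-ζ * x) := by
      rw [← Real.exp_zero]; apply Real.exp_le_exp.mpr; nlinarith
    have h1 : ‖Complex.exp (l * (x:ℂ)) - 1 - l * (x:ℂ)‖
        ≤ ‖Complex.exp (l * (x:ℂ))‖ + 1 + ‖l * (x:ℂ)‖ := by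
      calc ‖Complex.exp (l * (x:ℂ)) - 1 - l * (x:ℂ)‖
          ≤ ‖Complex.exp (l * (x:ℂ)) - 1‖ + ‖l * (x:ℂ)‖ := norm_sub_le _ _
        _ ≤ ‖Complex.exp (l * (x:ℂ))‖ + 1 + ‖l * (x:ℂ)‖ := by
            have := norm_sub_le (Complex.exp (l * (x:ℂ))) 1
            simp only [norm_one] at this; linarith
    rw [hexpnorm, hnorm] at h1
    have h2 : Real.exp (l.re * x) ≤ Real.exp (-ζ * x) := by
      apply Real.exp_le_exp.mpr; nlinarith
    have h3 : Real.exp (-ζ * x) ≤ |x| * Real.exp (-ζ * x) := by nlinarith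
    have h4 : (1:ℝ) ≤ |x| * Real.exp (-ζ * x) := by nlinarith
    have h5 : ‖l‖ * |x| ≤ ‖l‖ * (|x| * Real.exp (-ζ * x)) :=
      mul_le_mul_of_nonneg_left (by nlinarith [abs_nonneg x]) (norm_nonneg l)
    calc ‖Complex.exp (l * (x:ℂ)) - 1 - l * (x:ℂ)‖
        ≤ Real.exp (l.re * x) + 1 + ‖l‖ * |x| := h1
      _ ≤ (2 + ‖l‖) * (|x| * Real.exp (-ζ * x)) := by nlinarith
  · refine (((hν2.const_mul ((Real.exp ζ + 2) * ‖l‖^2)).restrict).mono'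
      (hcont.aestronglyMeasurable.restrict) ?_)
    rw [ae_restrict_iff' measurableSet_Ici]
    filter_upwards [lael hνsupp] with x hx0 hx
    simp only [mem_Ici] at hx
    have hb := lcexp_bound (l * (x:ℂ))
    rw [hexpnorm, hnorm] at hb
    have h2 : Real.exp (l.re * x) ≤ Real.exp ζ := by
      apply Real.exp_le_exp.mpr; nlinarith
    have h3 : (‖l‖ * |x|)^2 = ‖l‖^2 * x^2 := by
      rw [mul_pow, _root_.sq_abs]
    rw [h3] at hb
    calc ‖Complex.exp (l * (x:ℂ)) - 1 - l * (x:ℂ)‖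
        ≤ (Real.exp (l.re * x) + 2) * (‖l‖^2 * x^2) := hb
      _ ≤ (Real.exp ζ + 2) * ‖l‖^2 * x^2 := by
          have hn : (0:ℝ) ≤ ‖l‖^2 := sq_nonneg _
          nlinarith [sq_nonneg x, Real.exp_pos (l.re * x)]

lemma labs_int (ν : Measure ℝ) (r g : ℝ → ℝ) (hr : Integrable r ν) (hg : Integrable g ν)
    (D : ℝ) (hb : ∀ᵐ x ∂ν, |r x| ≤ D * g x) : |∫ x, r x ∂ν| ≤ D * ∫ x, g x ∂ν := by
  have h1 : |∫ x, r x ∂ν| ≤ ∫ x, |r x| ∂ν := by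
    have := norm_integral_le_integral_norm (f := r) (μ := ν)
    simpa [Real.norm_eq_abs] using this
  have h2 : ∫ x, |r x| ∂ν ≤ ∫ x, D * g x ∂ν := integral_mono_ae hr.abs (hg.const_mul D) hb
  rw [integral_const_mul] at h2
  linarith

lemma lmin_pull {D : ℝ} (hD : 0 < D) (a b : ℝ) : min a (D * b) = D * min (a / D) b := by
  rw [mul_min_of_nonneg _ _ hD.le, mul_div_cancel₀ _ hD.ne']

lemma lkey (ν : Measure ℝ) (g h : ℝ → ℝ) (hg : Integrable g ν)
    (hgc : Continuous g) (hhc : Continuous h)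
    (hg0 : ∀ x, 0 ≤ g x) (hh0 : ∀ x, 0 ≤ h x) {δ : ℝ} (hδ : 0 < δ) :
    ∃ M : ℝ, 0 < M ∧ ∀ (r : ℝ → ℝ) (D : ℝ), M ≤ D → Integrable r ν →
      (∀ᵐ x ∂ν, |r x| ≤ min (h x) (D * g x)) → |∫ x, r x ∂ν| ≤ δ * D := by
  obtain ⟨M, hM, hMs⟩ := lratio_small ν g h hg hgc hhc hg0 hh0 hδ
  refine ⟨M, hM, fun r D hMD hr hbound => ?_⟩
  have hD : 0 < D := lt_of_lt_of_le hM hMD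
  have hintmin : Integrable (fun x => min (h x) (D * g x)) ν := by
    refine (hg.const_mul D).mono' ((hhc.min (continuous_const.mul hgc)).aestronglyMeasurable) ?_
    refine ae_of_all _ fun x => ?_
    rw [Real.norm_eq_abs,
      _root_.abs_of_nonneg (le_min (hh0 x) (mul_nonneg hD.le (hg0 x)))]
    exact min_le_right _ _
  have h1 : |∫ x, r x ∂ν| ≤ ∫ x, |r x| ∂ν := by
    have := norm_integral_le_integral_norm (f := r) (μ := ν)
    simpa [Real.norm_eq_abs] using this
  have h2 : ∫ x, |r x| ∂ν ≤ ∫ x, min (h x) (D * g x) ∂ν :=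
    integral_mono_ae hr.abs hintmin hbound
  have h3 : ∫ x, min (h x) (D * g x) ∂ν = D * ∫ x, min (h x / D) (g x) ∂ν := by
    rw [← integral_const_mul]
    exact integral_congr_ae (ae_of_all _ fun x => lmin_pull hD _ _)
  have h4 := hMs D hMD
  calc |∫ x, r x ∂ν| ≤ D * ∫ x, min (h x / D) (g x) ∂ν := by rw [← h3]; linarith
    _ ≤ D * δ := mul_le_mul_of_nonneg_left h4 hD.le
    _ = δ * D := mul_comm _ _


lemma lcos_diff_le_two (a b : ℝ) : |Real.cos a - Real.cos b| ≤ 2 := by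
  rw [abs_le]
  constructor <;> nlinarith [Real.neg_one_le_cos a, Real.cos_le_one a,
    Real.neg_one_le_cos b, Real.cos_le_one b]

end prelim

/-- Lemma 3: expansion of `Re(ψ(v+iu) − ψ(−ζ−iz))`. -/
theorem stmt_2 (μ σ ζ : ℝ) (ν : Measure ℝ) [SigmaFinite ν]
    (hσ : 0 < σ) (hζ : 0 ≤ ζ)
    (hνsupp : ν (Set.Ici (0 : ℝ)) = 0)
    (hν2 : Integrable (fun x : ℝ => x ^ 2) ν)
    (hνexp : IntegrableOn (fun x : ℝ => |x| * Real.exp (-ζ * x)) (Set.Iio (-1 : ℝ)) ν) :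
    ∃ R₁ R₂ R₃ R₄ R₅ : ℝ → ℝ → ℝ → ℝ,
      IsRem R₁ (fun u _ z => z ^ 2 - u ^ 2) ∧
      (∀ (u z : ℝ) (v : ℝ), 0 < v → 0 ≤ R₂ u v z) ∧
      IsRem R₂ (fun u v _ => u * v) ∧
      (∀ (u z : ℝ) (v : ℝ), 0 < v → 0 ≤ R₃ u v z) ∧
      IsRem R₃ (fun _ v _ => v ^ 2) ∧
      IsRem R₄ (fun _ _ z => z) ∧
      (∃ C : ℝ, ∀ (u z : ℝ) (v : ℝ), 0 < v → |R₅ u v z| ≤ C) ∧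
      ∀ (u z : ℝ) (v : ℝ), 0 < v →
        (psi μ σ ν ((v : ℂ) + Complex.I * (u : ℂ)) -
            psi μ σ ν (-(ζ : ℂ) - Complex.I * (z : ℂ))).re
          = μ * (v + ζ) + (v ^ 2 + z ^ 2 - u ^ 2) * σ ^ 2 / 2
            + R₁ u v z + R₂ u v z + R₃ u v z + R₄ u v z + R₅ u v z := by
  have hae : ∀ᵐ x : ℝ ∂ν, x < 0 := lael hνsupp
  -- the auxiliary weight gf
  set gf : ℝ → ℝ := fun x => |Real.exp (-ζ * x) - 1| * |x| with hgf_def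
  have hgfc : Continuous gf := by
    apply Continuous.mul
    · exact ((Real.continuous_exp.comp (continuous_const.mul continuous_id)).sub
        continuous_const).abs
    · exact continuous_abs
  have hgf0 : ∀ x, 0 ≤ gf x := fun x => mul_nonneg (abs_nonneg _) (abs_nonneg _)
  have hgf_eq : ∀ x : ℝ, x < 0 → gf x = (Real.exp (-ζ * x) - 1) * (-x) := by
    intro x hx
    have h1 : (0:ℝ) ≤ -ζ * x := by nlinarith
    have h2 : 1 ≤ Real.exp (-ζ * x) := by
      rw [← Real.exp_zero]; exact Real.exp_le_exp.mpr h1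
    simp only [hgf_def]
    rw [_root_.abs_of_nonneg (by linarith : (0:ℝ) ≤ Real.exp (-ζ*x) - 1), abs_of_neg hx]
  have hgfI : Integrable gf ν := by
    apply lsplit (f := gf)
    · refine hνexp.mono' (hgfc.aestronglyMeasurable.restrict) ?_
      rw [ae_restrict_iff' measurableSet_Iio]
      refine ae_of_all _ fun x hx => ?_
      simp only [mem_Iio] at hx
      have hx0 : x < 0 := by linarith
      have h1 : (0:ℝ) ≤ -ζ * x := by nlinarith
      have h2 : 1 ≤ Real.exp (-ζ * x) := by
        rw [← Real.exp_zero]; exact Real.exp_le_exp.mpr h1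
      rw [Real.norm_eq_abs, _root_.abs_of_nonneg (hgf0 x), hgf_eq x hx0, abs_of_neg hx0]
      nlinarith [Real.exp_pos (-ζ*x)]
    · refine ((hν2.const_mul (ζ * Real.exp ζ)).restrict).mono'
        (hgfc.aestronglyMeasurable.restrict) ?_
      rw [ae_restrict_iff' measurableSet_Ici]
      filter_upwards [hae] with x hx0 hx1
      simp only [mem_Ici] at hx1
      have e1 : Real.exp (-ζ*x) - 1 ≤ (-ζ*x) * Real.exp (-ζ*x) := by
        linarith [lexp_sub_one (-ζ*x)]
      have e2 : Real.exp (-ζ*x) ≤ Real.exp ζ := Real.exp_le_exp.mpr (by nlinarith)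
      have e3 : 0 ≤ Real.exp (-ζ*x) - 1 := by nlinarith [lexp_one_le, lexp_one_le (-ζ*x)]
      rw [Real.norm_eq_abs, _root_.abs_of_nonneg (hgf0 x), hgf_eq x hx0]
      have e4 : Real.exp (-ζ*x) - 1 ≤ ζ * (-x) * Real.exp ζ := by
        nlinarith [Real.exp_pos (-ζ*x)]
      nlinarith
  -- integrability of the five real integrands
  have hI1 : ∀ u z : ℝ, Integrable (fun x => Real.cos (u*x) - Real.cos (z*x)) ν := by
    intro u z
    refine (hν2.const_mul (|u^2 - z^2|/2)).mono'
      (((Real.continuous_cos.comp (continuous_const.mul continuous_id)).sub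
        (Real.continuous_cos.comp (continuous_const.mul continuous_id))).aestronglyMeasurable) ?_
    refine ae_of_all _ fun x => ?_
    rw [Real.norm_eq_abs]
    calc |Real.cos (u*x) - Real.cos (z*x)| ≤ |(u*x)^2 - (z*x)^2|/2 := lcos_diff _ _
      _ = |u^2 - z^2|/2 * x^2 := by
          rw [show (u*x)^2 - (z*x)^2 = (u^2 - z^2) * x^2 by ring, abs_mul, _root_.abs_of_nonneg (sq_nonneg x)]
          ring
  have hI2 : ∀ u v : ℝ, 0 < v →
      Integrable (fun x => (1 - Real.exp (v*x)) * (1 - Real.cos (u*x))) ν := by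
    intro u v hv
    refine (hν2.const_mul (|u| * v)).mono'
      (((continuous_const.sub (Real.continuous_exp.comp
        (continuous_const.mul continuous_id))).mul
        (continuous_const.sub (Real.continuous_cos.comp
        (continuous_const.mul continuous_id)))).aestronglyMeasurable) ?_
    filter_upwards [hae] with x hx0
    have hvx : v * x ≤ 0 := by nlinarith
    have a1 : 0 ≤ 1 - Real.exp (v*x) := by linarith [lexp_le_one hvx]
    have a2 : 1 - Real.exp (v*x) ≤ v * (-x) := by linarith [lexp_one_le (v*x)]
    have b1 : 0 ≤ 1 - Real.cos (u*x) := lone_sub_cos_nonneg _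
    have b2 : 1 - Real.cos (u*x) ≤ |u| * (-x) := by
      calc 1 - Real.cos (u*x) ≤ |u*x| := lone_sub_cos_le_abs _
        _ = |u| * (-x) := by rw [abs_mul, abs_of_neg hx0]
    rw [Real.norm_eq_abs, _root_.abs_of_nonneg (mul_nonneg a1 b1)]
    have := mul_le_mul a2 b2 b1 (by nlinarith)
    nlinarith
  have hI3 : ∀ v : ℝ, 0 < v → Integrable (fun x => Real.exp (v*x) - 1 - v*x) ν := by
    intro v hv
    refine (hν2.const_mul (v^2)).mono'
      (((Real.continuous_exp.comp (continuous_const.mul continuous_id)).sub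
        continuous_const).sub (continuous_const.mul continuous_id)).aestronglyMeasurable ?_
    filter_upwards [hae] with x hx0
    have hvx : v * x ≤ 0 := by nlinarith
    rw [Real.norm_eq_abs, _root_.abs_of_nonneg (by linarith [lexp_one_le (v*x)])]
    calc Real.exp (v*x) - 1 - v*x ≤ (v*x)^2 := lexp_quad hvx
      _ = v^2 * x^2 := by ring
  have hI4 : ∀ z : ℝ, Integrable (fun x => (Real.exp (-ζ*x) - 1) * (1 - Real.cos (z*x))) ν := by
    intro z
    refine (hgfI.const_mul (|z|)).mono'
      (((Real.continuous_exp.comp (continuous_const.mul continuous_id)).sub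
        continuous_const).mul
        (continuous_const.sub (Real.continuous_cos.comp
        (continuous_const.mul continuous_id)))).aestronglyMeasurable ?_
    refine ae_of_all _ fun x => ?_
    rw [Real.norm_eq_abs, abs_mul]
    calc |Real.exp (-ζ*x) - 1| * |1 - Real.cos (z*x)|
        ≤ |Real.exp (-ζ*x) - 1| * (|z| * |x|) := by
          apply mul_le_mul_of_nonneg_left _ (abs_nonneg _)
          rw [_root_.abs_of_nonneg (lone_sub_cos_nonneg _)]
          calc 1 - Real.cos (z*x) ≤ |z*x| := lone_sub_cos_le_abs _
            _ = |z| * |x| := abs_mul _ _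
      _ = |z| * gf x := by simp only [hgf_def]; ring
  have hIk : Integrable (fun x => Real.exp (-ζ*x) - 1 + ζ*x) ν := by
    refine (hgfI.const_mul ζ).mono'
      (((Real.continuous_exp.comp (continuous_const.mul continuous_id)).sub
        continuous_const).add (continuous_const.mul continuous_id)).aestronglyMeasurable ?_
    filter_upwards [hae] with x hx0
    have h1 : (0:ℝ) ≤ -ζ * x := by nlinarith
    have h2 : 0 ≤ Real.exp (-ζ*x) - 1 + ζ*x := by linarith [lexp_one_le (-ζ*x)]
    have h3 : Real.exp (-ζ*x) - 1 ≤ (-ζ*x) * Real.exp (-ζ*x) := by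
      linarith [lexp_sub_one (-ζ*x)]
    have h4 : Real.exp (-ζ*x) - 1 + ζ*x ≤ (-ζ*x) * (Real.exp (-ζ*x) - 1) := by nlinarith
    rw [Real.norm_eq_abs, _root_.abs_of_nonneg h2, hgf_eq x hx0]
    nlinarith [lexp_one_le (-ζ*x)]
  -- complex integrability
  have hre1 : ∀ v u : ℝ, ((v:ℂ) + Complex.I * (u:ℂ)).re = v := by intro v u; simp
  have him1 : ∀ v u : ℝ, ((v:ℂ) + Complex.I * (u:ℂ)).im = u := by intro v u; simp
  have hre2 : ∀ z : ℝ, (-(ζ:ℂ) - Complex.I * (z:ℂ)).re = -ζ := by intro z; simp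
  have him2 : ∀ z : ℝ, (-(ζ:ℂ) - Complex.I * (z:ℂ)).im = -z := by intro z; simp
  have hf1 : ∀ v u : ℝ, 0 < v → Integrable
      (fun x : ℝ => Complex.exp (((v:ℂ) + Complex.I * (u:ℂ)) * (x:ℂ)) - 1 -
        ((v:ℂ) + Complex.I * (u:ℂ)) * (x:ℂ)) ν := by
    intro v u hv
    exact lfc ζ hζ ν hνsupp hν2 hνexp _ (by rw [hre1]; linarith)
  have hf2 : ∀ z : ℝ, Integrable
      (fun x : ℝ => Complex.exp ((-(ζ:ℂ) - Complex.I * (z:ℂ)) * (x:ℂ)) - 1 -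
        (-(ζ:ℂ) - Complex.I * (z:ℂ)) * (x:ℂ)) ν := by
    intro z
    exact lfc ζ hζ ν hνsupp hν2 hνexp _ (by rw [hre2])
  -- real parts of the complex integrals
  have hrepoint : ∀ (l : ℂ) (x : ℝ),
      (Complex.exp (l * (x:ℂ)) - 1 - l * (x:ℂ)).re
        = Real.exp (l.re * x) * Real.cos (l.im * x) - 1 - l.re * x := by
    intro l x
    simp [Complex.exp_re, Complex.mul_re, Complex.mul_im]
  have hrei : ∀ (l : ℂ), Integrable (fun x : ℝ => Complex.exp (l * (x:ℂ)) - 1 - l * (x:ℂ)) ν →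
      (∫ x : ℝ, (Complex.exp (l * (x:ℂ)) - 1 - l * (x:ℂ)) ∂ν).re
        = ∫ x : ℝ, (Real.exp (l.re * x) * Real.cos (l.im * x) - 1 - l.re * x) ∂ν := by
    intro l hl
    rw [← RCLike.re_to_complex, ← integral_re hl]
    exact integral_congr_ae (ae_of_all _ fun x => by
      simp only [RCLike.re_to_complex]; exact hrepoint l x)
  -- the remainder functions
  refine ⟨fun u v z => ∫ x, (Real.cos (u*x) - Real.cos (z*x)) ∂ν,
          fun u v z => ∫ x, (1 - Real.exp (v*x)) * (1 - Real.cos (u*x)) ∂ν,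
          fun u v z => ∫ x, (Real.exp (v*x) - 1 - v*x) ∂ν,
          fun u v z => ∫ x, (Real.exp (-ζ*x) - 1) * (1 - Real.cos (z*x)) ∂ν,
          fun _ _ _ => -(σ^2*ζ^2/2) - ∫ x, (Real.exp (-ζ*x) - 1 + ζ*x) ∂ν,
          ?_, ?_, ?_, ?_, ?_, ?_, ?_, ?_⟩
  · -- IsRem R₁ (z²-u²)
    constructor
    · refine ⟨(∫ x, x^2/2 ∂ν), fun u z v hv => ?_⟩
      simp only
      have hb := labs_int ν _ (fun x => x^2/2) (hI1 u z) (hν2.div_const 2) (|z^2 - u^2|)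
        (ae_of_all _ fun x => ?_)
      · linarith [hb]
      · calc |Real.cos (u*x) - Real.cos (z*x)| ≤ |(u*x)^2 - (z*x)^2|/2 := lcos_diff _ _
          _ = |z^2 - u^2| * (x^2/2) := by
              rw [show (u*x)^2 - (z*x)^2 = -((z^2 - u^2) * x^2) by ring, abs_neg, abs_mul,
                _root_.abs_of_nonneg (sq_nonneg x)]
              ring
    · intro δ hδ
      obtain ⟨M, hM0, hMk⟩ := lkey ν (fun x => x^2/2) (fun _ => (2:ℝ)) (hν2.div_const 2)
        (by fun_prop) continuous_const (fun x => by positivity) (fun _ => by norm_num) hδ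
      refine ⟨M, hM0, fun u z v hv hMf => ?_⟩
      simp only at hMf ⊢
      refine hMk _ _ hMf (hI1 u z) (ae_of_all _ fun x => le_min (lcos_diff_le_two _ _) ?_)
      calc |Real.cos (u*x) - Real.cos (z*x)| ≤ |(u*x)^2 - (z*x)^2|/2 := lcos_diff _ _
        _ = |z^2 - u^2| * (x^2/2) := by
            rw [show (u*x)^2 - (z*x)^2 = -((z^2 - u^2) * x^2) by ring, abs_neg, abs_mul,
              _root_.abs_of_nonneg (sq_nonneg x)]
            ring
  · -- R₂ nonneg
    intro u z v hv
    simp only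
    apply integral_nonneg_of_ae
    filter_upwards [hae] with x hx0
    simp only [Pi.zero_apply]
    have hvx : v * x ≤ 0 := by nlinarith
    exact mul_nonneg (by linarith [lexp_le_one hvx]) (lone_sub_cos_nonneg _)
  · -- IsRem R₂ (u*v)
    have hbnd : ∀ (u v : ℝ), 0 < v → ∀ᵐ x ∂ν,
        |(1 - Real.exp (v*x)) * (1 - Real.cos (u*x))| ≤ min 2 (|u*v| * x^2) := by
      intro u v hv
      filter_upwards [hae] with x hx0
      have hvx : v * x ≤ 0 := by nlinarith
      have a1 : 0 ≤ 1 - Real.exp (v*x) := by linarith [lexp_le_one hvx]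
      have a2 : 1 - Real.exp (v*x) ≤ v * (-x) := by linarith [lexp_one_le (v*x)]
      have a3 : 1 - Real.exp (v*x) ≤ 1 := by linarith [Real.exp_pos (v*x)]
      have b1 : 0 ≤ 1 - Real.cos (u*x) := lone_sub_cos_nonneg _
      have b2 : 1 - Real.cos (u*x) ≤ |u| * (-x) := by
        calc 1 - Real.cos (u*x) ≤ |u*x| := lone_sub_cos_le_abs _
          _ = |u| * (-x) := by rw [abs_mul, abs_of_neg hx0]
      have b3 : 1 - Real.cos (u*x) ≤ 2 := lone_sub_cos_le_two _
      rw [_root_.abs_of_nonneg (mul_nonneg a1 b1)]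
      refine le_min (by nlinarith) ?_
      have huv : |u*v| = |u| * v := by rw [abs_mul, abs_of_pos hv]
      have h2 := mul_le_mul a2 b2 b1 (by nlinarith)
      rw [huv]; nlinarith
    constructor
    · refine ⟨(∫ x, x^2 ∂ν), fun u z v hv => ?_⟩
      simp only
      have hb := labs_int ν _ (fun x => x^2) (hI2 u v hv) hν2 (|u*v|) ?_
      · linarith [hb]
      · filter_upwards [hbnd u v hv] with x hx
        exact le_trans hx (min_le_right _ _)
    · intro δ hδ
      obtain ⟨M, hM0, hMk⟩ := lkey ν (fun x => x^2) (fun _ => (2:ℝ)) hν2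
        (by fun_prop) continuous_const (fun x => sq_nonneg x) (fun _ => by norm_num) hδ
      refine ⟨M, hM0, fun u z v hv hMf => ?_⟩
      simp only at hMf ⊢
      exact hMk _ _ hMf (hI2 u v hv) (hbnd u v hv)
  · -- R₃ nonneg
    intro u z v hv
    simp only
    apply integral_nonneg_of_ae
    refine ae_of_all _ fun x => ?_
    simp only [Pi.zero_apply]
    linarith [lexp_one_le (v*x)]
  · -- IsRem R₃ (v²)
    constructor
    · refine ⟨(∫ x, x^2 ∂ν), fun u z v hv => ?_⟩
      simp only
      have hb := labs_int ν _ (fun x => x^2) (hI3 v hv) hν2 (v^2) ?_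
      · calc |∫ x, (Real.exp (v*x) - 1 - v*x) ∂ν| ≤ v^2 * ∫ x, x^2 ∂ν := hb
          _ = (∫ x, x^2 ∂ν) * |v^2| := by
              rw [_root_.abs_of_nonneg (sq_nonneg v)]; ring
      · filter_upwards [hae] with x hx0
        have hvx : v * x ≤ 0 := by nlinarith
        rw [_root_.abs_of_nonneg (by linarith [lexp_one_le (v*x)])]
        calc Real.exp (v*x) - 1 - v*x ≤ (v*x)^2 := lexp_quad hvx
          _ = v^2 * x^2 := by ring
    · intro δ hδ
      obtain ⟨M, hM0, hMk⟩ := lratio_small ν (fun x => x^2) (fun x => |x|) hν2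
        (by fun_prop) (_root_.continuous_abs : Continuous fun x : ℝ => |x|) (fun x => sq_nonneg x) (fun x => abs_nonneg x) hδ
      refine ⟨max (M^2) 1, by positivity, fun u z v hv hMf => ?_⟩
      simp only at hMf ⊢
      rw [_root_.abs_of_nonneg (sq_nonneg v)] at hMf
      have hvM : M ≤ v := by nlinarith [le_max_left (M^2) 1]
      have hintmin : Integrable (fun x => min (v*|x|) (v^2*x^2)) ν := by
        refine (hν2.const_mul (v^2)).mono'
          (((continuous_const.mul (_root_.continuous_abs : Continuous fun x : ℝ => |x|)).min ((continuous_const.mul (continuous_pow 2)) : Continuous fun x : ℝ => v^2 * x^2)).aestronglyMeasurable) ?_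
        refine ae_of_all _ fun x => ?_
        rw [Real.norm_eq_abs, _root_.abs_of_nonneg (le_min (by positivity) (by positivity))]
        exact min_le_right _ _
      have h1 : |∫ x, (Real.exp (v*x) - 1 - v*x) ∂ν| ≤ ∫ x, |Real.exp (v*x) - 1 - v*x| ∂ν := by
        have := norm_integral_le_integral_norm (f := fun x => Real.exp (v*x) - 1 - v*x) (μ := ν)
        simpa [Real.norm_eq_abs] using this
      have h2 : ∫ x, |Real.exp (v*x) - 1 - v*x| ∂ν ≤ ∫ x, min (v*|x|) (v^2*x^2) ∂ν := by
        refine integral_mono_ae (hI3 v hv).abs hintmin ?_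
        filter_upwards [hae] with x hx0
        have hvx : v * x ≤ 0 := by nlinarith
        rw [_root_.abs_of_nonneg (by linarith [lexp_one_le (v*x)])]
        refine le_min ?_ ?_
        · calc Real.exp (v*x) - 1 - v*x ≤ -(v*x) := lexp_lin hvx
            _ = v * |x| := by rw [abs_of_neg hx0]; ring
        · calc Real.exp (v*x) - 1 - v*x ≤ (v*x)^2 := lexp_quad hvx
            _ = v^2 * x^2 := by ring
      have h3 : ∫ x, min (v*|x|) (v^2*x^2) ∂ν = v^2 * ∫ x, min (|x|/v) (x^2) ∂ν := by
        rw [← integral_const_mul]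
        refine integral_congr_ae (ae_of_all _ fun x => ?_)
        show min (v*|x|) (v^2*x^2) = v^2 * min (|x|/v) (x^2)
        rw [mul_min_of_nonneg _ _ (by positivity : (0:ℝ) ≤ v^2)]
        have hv2 : v^2 * (|x|/v) = v * |x| := by
          field_simp
        rw [hv2]
      have h4 := hMk v hvM
      calc |∫ x, (Real.exp (v*x) - 1 - v*x) ∂ν| ≤ v^2 * ∫ x, min (|x|/v) (x^2) ∂ν := by
            rw [← h3]; linarith
        _ ≤ v^2 * δ := mul_le_mul_of_nonneg_left h4 (by positivity)
        _ = δ * |v^2| := by rw [_root_.abs_of_nonneg (sq_nonneg v)]; ring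
  · -- IsRem R₄ z
    have hbnd : ∀ (z : ℝ), ∀ x : ℝ,
        |(Real.exp (-ζ*x) - 1) * (1 - Real.cos (z*x))|
          ≤ min (2 * |Real.exp (-ζ*x) - 1|) (|z| * gf x) := by
      intro z x
      rw [abs_mul, _root_.abs_of_nonneg (lone_sub_cos_nonneg (z*x))]
      refine le_min ?_ ?_
      · calc |Real.exp (-ζ*x) - 1| * (1 - Real.cos (z*x))
            ≤ |Real.exp (-ζ*x) - 1| * 2 :=
              mul_le_mul_of_nonneg_left (lone_sub_cos_le_two _) (abs_nonneg _)
          _ = 2 * |Real.exp (-ζ*x) - 1| := by ring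
      · calc |Real.exp (-ζ*x) - 1| * (1 - Real.cos (z*x))
            ≤ |Real.exp (-ζ*x) - 1| * (|z| * |x|) := by
              refine mul_le_mul_of_nonneg_left ?_ (abs_nonneg _)
              calc 1 - Real.cos (z*x) ≤ |z*x| := lone_sub_cos_le_abs _
                _ = |z| * |x| := abs_mul _ _
          _ = |z| * gf x := by simp only [hgf_def]; ring
    constructor
    · refine ⟨(∫ x, gf x ∂ν), fun u z v hv => ?_⟩
      simp only
      have hb := labs_int ν _ gf (hI4 z) hgfI (|z|)
        (ae_of_all _ fun x => le_trans (hbnd z x) (min_le_right _ _))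
      linarith [hb]
    · intro δ hδ
      obtain ⟨M, hM0, hMk⟩ := lkey ν gf (fun x => 2 * |Real.exp (-ζ*x) - 1|) hgfI hgfc
        (by fun_prop) hgf0 (fun x => by positivity) hδ
      refine ⟨M, hM0, fun u z v hv hMf => ?_⟩
      simp only at hMf ⊢
      exact hMk _ _ hMf (hI4 z) (ae_of_all _ fun x => hbnd z x)
  · -- R₅ bounded
    exact ⟨|(-(σ^2*ζ^2/2) - ∫ x, (Real.exp (-ζ*x) - 1 + ζ*x) ∂ν)|, fun u z v hv => le_refl _⟩
  · -- the expansion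
    intro u z v hv
    simp only
    have e1 := hrei ((v:ℂ) + Complex.I * (u:ℂ)) (hf1 v u hv)
    rw [hre1 v u, him1 v u] at e1
    have e2 := hrei (-(ζ:ℂ) - Complex.I * (z:ℂ)) (hf2 z)
    rw [hre2 z, him2 z] at e2
    have e2' : (∫ x : ℝ, (Complex.exp ((-(ζ:ℂ) - Complex.I * (z:ℂ)) * (x:ℂ)) - 1 -
        (-(ζ:ℂ) - Complex.I * (z:ℂ)) * (x:ℂ)) ∂ν).re
        = ∫ x, (Real.exp (-ζ*x) * Real.cos (z*x) - 1 + ζ*x) ∂ν := by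
      rw [e2]
      refine integral_congr_ae (ae_of_all _ fun x => ?_)
      simp only [neg_mul, Real.cos_neg]
      ring
    have hA1 : Integrable (fun x => Real.exp (v*x) * Real.cos (u*x) - 1 - v*x) ν := by
      refine ((hf1 v u hv).re).congr (ae_of_all _ fun x => ?_)
      simp only [RCLike.re_to_complex]
      rw [hrepoint, hre1 v u, him1 v u]
    have hA2 : Integrable (fun x => Real.exp (-ζ*x) * Real.cos (z*x) - 1 + ζ*x) ν := by
      refine ((hf2 z).re).congr (ae_of_all _ fun x => ?_)
      simp only [RCLike.re_to_complex]
      rw [hrepoint, hre2 z, him2 z]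
      simp only [neg_mul, Real.cos_neg]
      ring
    have key : (∫ x, (Real.exp (v*x) * Real.cos (u*x) - 1 - v*x) ∂ν)
        - (∫ x, (Real.exp (-ζ*x) * Real.cos (z*x) - 1 + ζ*x) ∂ν)
        = (∫ x, (Real.cos (u*x) - Real.cos (z*x)) ∂ν)
          + (∫ x, (1 - Real.exp (v*x)) * (1 - Real.cos (u*x)) ∂ν)
          + (∫ x, (Real.exp (v*x) - 1 - v*x) ∂ν)
          + (∫ x, (Real.exp (-ζ*x) - 1) * (1 - Real.cos (z*x)) ∂ν)
          - (∫ x, (Real.exp (-ζ*x) - 1 + ζ*x) ∂ν) := by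
      rw [← integral_sub hA1 hA2]
      rw [show (fun x => (Real.exp (v*x) * Real.cos (u*x) - 1 - v*x) -
          (Real.exp (-ζ*x) * Real.cos (z*x) - 1 + ζ*x))
        = (fun x => ((Real.cos (u*x) - Real.cos (z*x))
            + (1 - Real.exp (v*x)) * (1 - Real.cos (u*x))
            + (Real.exp (v*x) - 1 - v*x)
            + (Real.exp (-ζ*x) - 1) * (1 - Real.cos (z*x)))
            - (Real.exp (-ζ*x) - 1 + ζ*x)) from funext fun x => by ring]
      have j2 : Integrable (fun x => (Real.cos (u*x) - Real.cos (z*x))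
          + (1 - Real.exp (v*x)) * (1 - Real.cos (u*x))) ν :=
        (hI1 u z).add (hI2 u v hv)
      have j3 : Integrable (fun x => ((Real.cos (u*x) - Real.cos (z*x))
          + (1 - Real.exp (v*x)) * (1 - Real.cos (u*x)))
          + (Real.exp (v*x) - 1 - v*x)) ν := j2.add (hI3 v hv)
      have j4 : Integrable (fun x => (((Real.cos (u*x) - Real.cos (z*x))
          + (1 - Real.exp (v*x)) * (1 - Real.cos (u*x)))
          + (Real.exp (v*x) - 1 - v*x))
          + (Real.exp (-ζ*x) - 1) * (1 - Real.cos (z*x))) ν := j3.add (hI4 z)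
      rw [integral_sub j4 hIk, integral_add j3 (hI4 z), integral_add j2 (hI3 v hv),
        integral_add (hI1 u z) (hI2 u v hv)]
    have s1 : ((μ:ℂ) * ((v:ℂ) + Complex.I * (u:ℂ))).re = μ * v := by
      simp [Complex.mul_re]
    have s3 : ((μ:ℂ) * (-(ζ:ℂ) - Complex.I * (z:ℂ))).re = μ * (-ζ) := by
      simp [Complex.mul_re]
    have hcast : ((σ:ℂ)^2/2) = ((σ^2/2 : ℝ) : ℂ) := by push_cast; ring
    have s2 : (((σ:ℂ)^2/2) * ((v:ℂ) + Complex.I * (u:ℂ))^2).re = σ^2/2 * (v^2 - u^2) := by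
      rw [hcast, Complex.re_ofReal_mul, show ((v:ℂ) + Complex.I * (u:ℂ))^2 = ((v:ℂ) + Complex.I * (u:ℂ)) * ((v:ℂ) + Complex.I * (u:ℂ)) from pow_two _, Complex.mul_re, hre1, him1]
      ring
    have s4 : (((σ:ℂ)^2/2) * (-(ζ:ℂ) - Complex.I * (z:ℂ))^2).re = σ^2/2 * (ζ^2 - z^2) := by
      rw [hcast, Complex.re_ofReal_mul, show (-(ζ:ℂ) - Complex.I * (z:ℂ))^2 = (-(ζ:ℂ) - Complex.I * (z:ℂ)) * (-(ζ:ℂ) - Complex.I * (z:ℂ)) from pow_two _, Complex.mul_re, hre2, him2]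
      ring
    simp only [psi, Complex.sub_re, Complex.add_re]
    rw [s1, s2, s3, s4, e1, e2']
    linarith [key]
end
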